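/- arXiv:1509.08123 — 7 statements merged into one kernel-verified Lean document; each statement's English description precedes it below -/
import Mathlib

section
/- Let G=(V,E) be a finite simple undirected graph, let C ⊆ V span a clique in G, and let 0<ε<1. Let U' = (u₁,…,u_k) be a sequence of k ≥ 50/ε² vertices chosen uniformly and independently at random from C. Then, with probability at least 1 − e^{−25/ε} over the choice of U', the number of vertices v ∈ V that are adjacent to all of u₁,…,u_k but are adjacent to fewer than (1−ε)|C| vertices of C is at most e^{−25/ε}·|V|. -/
open Finset

open scoped Classical in
/-- if `C` spans a clique in `G` and `U' = (u₁, …, u_k)` is a sequence of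
`k ≥ 50/ε²` uniformly and independently chosen vertices of `C`, then with probability at
least `1 - e^{-25/ε}` the number of vertices `v ∈ V` adjacent to all the `u i` but adjacent
to fewer than `(1-ε)|C|` vertices of `C` is at most `e^{-25/ε}·|V|`. -/
theorem clique_sample_good {V : Type*} [Fintype V] [DecidableEq V]
    (G : SimpleGraph V) [DecidableRel G.Adj]
    (C : Finset V) (hC : C.Nonempty)
    (hclique : ∀ u ∈ C, ∀ v ∈ C, u ≠ v → G.Adj u v)
    (ε : ℝ) (hε0 : 0 < ε) (hε1 : ε < 1)
    (k : ℕ) (hk : 50 / ε ^ 2 ≤ (k : ℝ)) :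
    1 - Real.exp (-25 / ε) ≤
      (((Finset.univ : Finset (Fin k → V)).filter fun u =>
          (∀ i, u i ∈ C) ∧
          (((Finset.univ : Finset V).filter fun v =>
              (∀ i, G.Adj v (u i)) ∧
              ((C.filter fun c => G.Adj v c).card : ℝ) < (1 - ε) * (C.card : ℝ)).card : ℝ) ≤
            Real.exp (-25 / ε) * (Fintype.card V : ℝ)).card : ℝ) /
      (((Finset.univ : Finset (Fin k → V)).filter fun u => ∀ i, u i ∈ C).card : ℝ) := by
  have hVne : Nonempty V := ⟨hC.choose⟩
  have hV : (0:ℝ) < Fintype.card V := by exact_mod_cast Fintype.card_pos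
  set t : ℝ := Real.exp (-25 / ε) * Fintype.card V with htdef
  have htpos : 0 < t := mul_pos (Real.exp_pos _) hV
  set S : Finset (Fin k → V) := univ.filter fun u => ∀ i, u i ∈ C with hSdef
  have hScard : (S.card : ℝ) = (C.card : ℝ) ^ k := by
    have h1 : S = Fintype.piFinset fun _ : Fin k => C := by
      ext u; simp [hSdef, Fintype.mem_piFinset]
    rw [h1, Fintype.card_piFinset]
    push_cast
    simp
  have hCpos : (0:ℝ) < C.card := by exact_mod_cast hC.card_pos
  have hSpos : (0:ℝ) < S.card := by rw [hScard]; positivity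
  set X : (Fin k → V) → ℕ := fun u =>
    (univ.filter fun v => (∀ i, G.Adj v (u i)) ∧
      ((C.filter fun c => G.Adj v c).card : ℝ) < (1 - ε) * (C.card : ℝ)).card with hXdef
  set B : V → Prop := fun v =>
    ((C.filter fun c => G.Adj v c).card : ℝ) < (1 - ε) * (C.card : ℝ) with hBdef
  -- sum bound
  have hsum : ∑ u ∈ S, (X u : ℝ) ≤ (Fintype.card V : ℝ) * ((1 - ε) * C.card) ^ k := by
    have hswapN : ∑ u ∈ S, X u
        = ∑ v : V, (S.filter fun u => (∀ i, G.Adj v (u i)) ∧ B v).card := by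
      simp only [hXdef, hBdef, Finset.card_filter]
      rw [Finset.sum_comm]
    have hswap : ∑ u ∈ S, (X u : ℝ)
        = ∑ v : V, ((S.filter fun u => (∀ i, G.Adj v (u i)) ∧ B v).card : ℝ) := by
      rw [← Nat.cast_sum, hswapN, Nat.cast_sum]
    rw [hswap]
    have hbound : ∀ v : V,
        ((S.filter fun u => (∀ i, G.Adj v (u i)) ∧ B v).card : ℝ) ≤ ((1 - ε) * C.card) ^ k := by
      intro v
      by_cases hv : B v
      · have heq : (S.filter fun u => (∀ i, G.Adj v (u i)) ∧ B v)
            = Fintype.piFinset fun _ : Fin k => C.filter fun c => G.Adj v c := by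
          ext u
          simp only [hSdef, Fintype.mem_piFinset, mem_filter, mem_univ, true_and]
          constructor
          · rintro ⟨h1, h2, -⟩ i; exact ⟨h1 i, h2 i⟩
          · intro h; exact ⟨fun i => (h i).1, fun i => (h i).2, hv⟩
        rw [heq, Fintype.card_piFinset]
        simp only [Finset.prod_const, Finset.card_univ, Fintype.card_fin]
        push_cast
        exact pow_le_pow_left₀ (by positivity) (le_of_lt hv) k
      · have heq : (S.filter fun u => (∀ i, G.Adj v (u i)) ∧ B v) = ∅ := by
          apply Finset.filter_false_of_mem
          intro u _ h
          exact hv h.2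
        rw [heq]
        simp only [Finset.card_empty, Nat.cast_zero]
        have h0 : (0:ℝ) ≤ (1 - ε) * C.card := by nlinarith
        exact pow_nonneg h0 k
    calc ∑ v : V, ((S.filter fun u => (∀ i, G.Adj v (u i)) ∧ B v).card : ℝ)
        ≤ ∑ _v : V, ((1 - ε) * C.card) ^ k := Finset.sum_le_sum fun v _ => hbound v
      _ = (Fintype.card V : ℝ) * ((1 - ε) * C.card) ^ k := by
          rw [Finset.sum_const, Finset.card_univ, nsmul_eq_mul]
  -- Markov
  set Bad : Finset (Fin k → V) := S.filter fun u => t < (X u : ℝ) with hBaddef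
  have hBadsub : Bad ⊆ S := Finset.filter_subset _ _
  have hmarkov : t * (Bad.card : ℝ) ≤ ∑ u ∈ S, (X u : ℝ) := by
    calc t * (Bad.card : ℝ) = ∑ _u ∈ Bad, t := by rw [Finset.sum_const, nsmul_eq_mul]; ring
      _ ≤ ∑ u ∈ Bad, (X u : ℝ) := Finset.sum_le_sum fun u hu => le_of_lt (Finset.mem_filter.mp hu).2
      _ ≤ ∑ u ∈ S, (X u : ℝ) :=
          Finset.sum_le_sum_of_subset_of_nonneg hBadsub fun u _ _ => by positivity
  -- key exponential inequality
  have hexp : ((1 - ε)) ^ k ≤ Real.exp (-50 / ε) := by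
    have h1 : (1 - ε : ℝ) ≤ Real.exp (-ε) := by
      have := Real.add_one_le_exp (-ε); linarith
    have h2 : ((1 - ε : ℝ)) ^ k ≤ Real.exp (-ε) ^ k :=
      pow_le_pow_left₀ (by linarith) h1 k
    rw [← Real.exp_nat_mul] at h2
    refine h2.trans (Real.exp_le_exp.mpr ?_)
    have hεk : 50 / ε ≤ ε * k := by
      have h3 := mul_le_mul_of_nonneg_left hk hε0.le
      have hε2 : ε * (50 / ε ^ 2) = 50 / ε := by field_simp
      linarith [hε2 ▸ h3]
    have e1 : ((k:ℝ) * -ε : ℝ) = -(ε * k) := by ring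
    have e2 : (-50 / ε : ℝ) = -(50 / ε) := by ring
    rw [e1, e2]
    exact neg_le_neg hεk
  have hBadcard : (Bad.card : ℝ) ≤ Real.exp (-25 / ε) * (S.card : ℝ) := by
    have h1 : t * (Bad.card : ℝ) ≤ (Fintype.card V : ℝ) * ((1 - ε) * C.card) ^ k :=
      hmarkov.trans hsum
    rw [htdef] at h1
    have h2 : ((1 - ε) * (C.card:ℝ)) ^ k ≤ Real.exp (-50 / ε) * (C.card:ℝ) ^ k := by
      rw [mul_pow]
      exact mul_le_mul_of_nonneg_right hexp (by positivity)
    have h3 : Real.exp (-25 / ε) * (Fintype.card V : ℝ) * (Bad.card : ℝ)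
        ≤ (Fintype.card V : ℝ) * (Real.exp (-50 / ε) * (C.card:ℝ) ^ k) :=
      h1.trans (mul_le_mul_of_nonneg_left h2 hV.le)
    have h4 : Real.exp (-25 / ε) * (Bad.card : ℝ) ≤ Real.exp (-50 / ε) * (C.card:ℝ) ^ k := by
      refine le_of_mul_le_mul_left ?_ hV
      calc (Fintype.card V : ℝ) * (Real.exp (-25 / ε) * (Bad.card : ℝ))
          = Real.exp (-25 / ε) * (Fintype.card V : ℝ) * (Bad.card : ℝ) := by ring
        _ ≤ (Fintype.card V : ℝ) * (Real.exp (-50 / ε) * (C.card:ℝ) ^ k) := h3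
    rw [hScard]
    have h5 : Real.exp (-50 / ε) = Real.exp (-25/ε) * Real.exp (-25/ε) := by
      rw [← Real.exp_add]; ring_nf
    rw [h5] at h4
    have h6 : Real.exp (-25 / ε) * (Bad.card : ℝ)
        ≤ Real.exp (-25 / ε) * (Real.exp (-25/ε) * (C.card:ℝ) ^ k) := by
      calc Real.exp (-25 / ε) * (Bad.card : ℝ) ≤ _ := h4
        _ = Real.exp (-25 / ε) * (Real.exp (-25/ε) * (C.card:ℝ) ^ k) := by ring
    exact le_of_mul_le_mul_left h6 (Real.exp_pos _)
  -- goal set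
  have hgoalset : ((Finset.univ : Finset (Fin k → V)).filter fun u =>
          (∀ i, u i ∈ C) ∧ ((X u : ℝ) ≤ t)) = S \ Bad := by
    ext u
    simp only [Finset.mem_filter, Finset.mem_univ, true_and, Finset.mem_sdiff, hBaddef, hSdef,
      not_and, not_lt]
    tauto
  have hgc : (((Finset.univ : Finset (Fin k → V)).filter fun u =>
          (∀ i, u i ∈ C) ∧ ((X u : ℝ) ≤ t)).card : ℝ) = (S.card : ℝ) - (Bad.card : ℝ) := by
    rw [hgoalset, Finset.card_sdiff_of_subset hBadsub]
    have := Finset.card_le_card hBadsub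
    push_cast [this]
    ring
  show 1 - Real.exp (-25 / ε) ≤
      (((Finset.univ : Finset (Fin k → V)).filter fun u =>
          (∀ i, u i ∈ C) ∧ ((X u : ℝ) ≤ t)).card : ℝ) / (S.card : ℝ)
  rw [hgc, le_div_iff₀ hSpos]
  nlinarith [hBadcard, Real.exp_pos (-25 / ε)]
end

section
/- Let G=(V,E) be a finite simple undirected graph, let 0<ρ<1 and 0<ε<1, and let Γ ⊆ V be nonempty. For v ∈ V let f_v = |N(v)∩Γ|/|Γ| be the fraction of vertices of Γ adjacent to v. Suppose C ⊆ Γ satisfies |C| ≥ ρ|V| and (1/|C|)·Σ_{v∈C} f_v ≥ 1−2ε, and let S ⊆ Γ be any set of exactly ρ|V| vertices of Γ having the largest values of f_v (i.e., f_v ≥ f_w for all v ∈ S and w ∈ Γ∖S). Then (1/|S|)·Σ_{v∈S} f_v ≥ 1−2ε, and the edge density of S satisfies |E(S)|/C(|S|,2) ≥ 1 − 2ε/ρ, where E(S) ⊆ E is the set of edges with both endpoints in S and C(|S|,2) = |S|(|S|−1)/2. -/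
open Finset

variable {V : Type*} [Fintype V] [DecidableEq V]

/-- `N(v) ∩ W`: the neighbors of `v` lying in `W`. -/
def nbrsIn (G : SimpleGraph V) [DecidableRel G.Adj] (v : V) (W : Finset V) : Finset V :=
  W.filter fun w => G.Adj v w

/-- The set of edges of `G` with both endpoints in `S`. -/
def edgesIn (G : SimpleGraph V) [DecidableRel G.Adj] (S : Finset V) : Finset (Sym2 V) :=
  G.edgeFinset ∩ S.sym2

lemma handshakeS (G : SimpleGraph V) [DecidableRel G.Adj] (S : Finset V) :
    ∑ v ∈ S, (nbrsIn G v S).card = 2 * (edgesIn G S).card := by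
  classical
  let H : SimpleGraph V :=
    { Adj := fun v w => G.Adj v w ∧ v ∈ S ∧ w ∈ S,
      symm := ⟨by rintro v w ⟨h, hv, hw⟩; exact ⟨h.symm, hw, hv⟩⟩,
      loopless := ⟨by rintro v ⟨h, _, _⟩; exact G.loopless.irrefl v h⟩ }
  letI : DecidableRel H.Adj := fun v w => instDecidableAnd
  have hedges : H.edgeFinset = edgesIn G S := by
    ext e
    induction e using Sym2.ind with
    | _ a b =>
      simp only [edgesIn, Finset.mem_inter, SimpleGraph.mem_edgeFinset,
        SimpleGraph.mem_edgeSet, Finset.mk_mem_sym2_iff]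
      exact Iff.rfl
  have hdeg : ∀ v ∈ S, H.degree v = (nbrsIn G v S).card := by
    intro v hv
    rw [SimpleGraph.degree]
    congr 1
    ext w
    simp only [SimpleGraph.mem_neighborFinset, nbrsIn, Finset.mem_filter]
    show (G.Adj v w ∧ v ∈ S ∧ w ∈ S) ↔ _
    tauto
  have hdeg0 : ∀ v ∈ (univ : Finset V) \ S, H.degree v = 0 := by
    intro v hv
    rw [Finset.mem_sdiff] at hv
    rw [SimpleGraph.degree, Finset.card_eq_zero]
    ext w
    simp only [SimpleGraph.mem_neighborFinset, Finset.notMem_empty, iff_false]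
    rintro ⟨_, hvS, _⟩
    exact hv.2 hvS
  have := H.sum_degrees_eq_twice_card_edges
  rw [← Finset.sum_subset (Finset.subset_univ S)
    (fun v _ hv => hdeg0 v (Finset.mem_sdiff.mpr ⟨Finset.mem_univ v, hv⟩)),
    Finset.sum_congr rfl hdeg, hedges] at this
  omega

lemma final_algebra (ρ ε n s E : ℝ) (hρ0 : 0 < ρ) (hn : 0 < n)
    (hcase : 2*ε < ρ) (hs : s = ρ*n) (hs2 : 2 ≤ s)
    (hE : s^2 - 2*ε*s*n ≤ 2*E) :
    1 - 2*ε/ρ ≤ E / (s*(s-1)/2) := by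
  have hspos : 0 < s := by linarith
  have hdenpos : (0:ℝ) < s*(s-1)/2 := by
    have : (0:ℝ) < s*(s-1) := mul_pos hspos (by linarith)
    linarith
  rw [le_div_iff₀ hdenpos]
  have hds : 2*ε/ρ * s = 2*ε*n := by rw [hs]; field_simp
  have hds2 : (2*ε/ρ * s) * s = (2*ε*n) * s := by rw [hds]
  have h6 : 2*ε*n < ρ*n := mul_lt_mul_of_pos_right hcase hn
  have hstep : (1 - 2*ε/ρ) * (s*(s-1)) ≤ s^2 - 2*ε*s*n := by
    linarith [hds2, hds, h6, hs]
  linarith [hE, hstep]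

/-- if `S` consists of `ρ|V|` vertices of `Γ` with the largest fractions
`f_v = |N(v)∩Γ|/|Γ|` of neighbors in `Γ`, and some `C ⊆ Γ` with `|C| ≥ ρ|V|` has average
`f`-value at least `1-2ε`, then so does `S`, and the edge density of `S` is at least
`1 - 2ε/ρ`. -/
theorem clique_top_set_dense (G : SimpleGraph V) [DecidableRel G.Adj]
    (ρ ε : ℝ) (hρ0 : 0 < ρ) (hρ1 : ρ < 1) (hε0 : 0 < ε) (hε1 : ε < 1)
    (Γ : Finset V) (hΓne : Γ.Nonempty)
    (f : V → ℝ) (hf : ∀ v : V, f v = ((nbrsIn G v Γ).card : ℝ) / (Γ.card : ℝ))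
    (C : Finset V) (hCΓ : C ⊆ Γ) (hCcard : ρ * (Fintype.card V : ℝ) ≤ (C.card : ℝ))
    (hCavg : 1 - 2 * ε ≤ (1 / (C.card : ℝ)) * ∑ v ∈ C, f v)
    (S : Finset V) (hSΓ : S ⊆ Γ) (hScard : (S.card : ℝ) = ρ * (Fintype.card V : ℝ))
    (hStop : ∀ v ∈ S, ∀ w ∈ Γ \ S, f w ≤ f v) :
    1 - 2 * ε ≤ (1 / (S.card : ℝ)) * ∑ v ∈ S, f v ∧
    1 - 2 * ε / ρ ≤
      ((edgesIn G S).card : ℝ) / ((S.card : ℝ) * ((S.card : ℝ) - 1) / 2) := by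
  classical
  obtain ⟨n, hn⟩ : ∃ n : ℝ, n = (Fintype.card V : ℝ) := ⟨_, rfl⟩
  rw [← hn] at hCcard hScard
  have hγpos : (0:ℝ) < Γ.card := by exact_mod_cast Finset.card_pos.mpr hΓne
  have hγn : (Γ.card : ℝ) ≤ n := by rw [hn]; exact_mod_cast Finset.card_le_univ Γ
  have hnpos : 0 < n := lt_of_lt_of_le hγpos hγn
  have hSpos : (0:ℝ) < S.card := by rw [hScard]; positivity
  have hSne : S.Nonempty := Finset.card_pos.mp (by exact_mod_cast hSpos)
  have hCpos : (0:ℝ) < C.card := lt_of_lt_of_le (by rw [← hScard]; exact hSpos) hCcard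
  have hsc : (S.card : ℝ) ≤ C.card := by rw [hScard]; exact hCcard
  -- the minimum of f over S
  obtain ⟨v₀, hv₀S, hmin0⟩ := S.exists_min_image f hSne
  obtain ⟨m, hm⟩ : ∃ m : ℝ, m = f v₀ := ⟨_, rfl⟩
  have hmin : ∀ x ∈ S, m ≤ f x := fun x hx => hm ▸ hmin0 x hx
  have houtside : ∀ w ∈ Γ \ S, f w ≤ m := fun w hw => hm ▸ hStop v₀ hv₀S w hw
  -- sum bounds
  have hCsplit : ∑ v ∈ C ∩ S, f v + ∑ v ∈ C \ S, f v = ∑ v ∈ C, f v :=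
    Finset.sum_inter_add_sum_sdiff C S f
  have hSsplit : ∑ v ∈ S ∩ C, f v + ∑ v ∈ S \ C, f v = ∑ v ∈ S, f v :=
    Finset.sum_inter_add_sum_sdiff S C f
  have hCS : ∑ v ∈ C \ S, f v ≤ ((C \ S).card : ℝ) * m := by
    have := Finset.sum_le_card_nsmul (C \ S) f m
      (fun w hw => houtside w (by
        rw [Finset.mem_sdiff] at hw ⊢; exact ⟨hCΓ hw.1, hw.2⟩))
    simpa [nsmul_eq_mul] using this
  have hSC : ((S \ C).card : ℝ) * m ≤ ∑ v ∈ S \ C, f v := by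
    have := Finset.card_nsmul_le_sum (S \ C) f m
      (fun w hw => hmin w (Finset.mem_sdiff.mp hw).1)
    simpa [nsmul_eq_mul] using this
  have hcard1 : ((C ∩ S).card : ℝ) + ((C \ S).card : ℝ) = (C.card : ℝ) := by
    exact_mod_cast Finset.card_inter_add_card_sdiff C S
  have hcard2 : ((S ∩ C).card : ℝ) + ((S \ C).card : ℝ) = (S.card : ℝ) := by
    exact_mod_cast Finset.card_inter_add_card_sdiff S C
  have hicomm : ∑ v ∈ C ∩ S, f v = ∑ v ∈ S ∩ C, f v := by rw [Finset.inter_comm]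
  have hccomm : ((C ∩ S).card : ℝ) = ((S ∩ C).card : ℝ) := by rw [Finset.inter_comm]
  have hcs' : ((C \ S).card : ℝ) = ((S \ C).card : ℝ) + ((C.card : ℝ) - S.card) := by
    linarith
  have h5 : ((C \ S).card : ℝ) * m
      = ((S \ C).card : ℝ) * m + ((C.card : ℝ) - S.card) * m := by
    rw [hcs', add_mul]
  have hBA : ∑ v ∈ C, f v ≤ ∑ v ∈ S, f v + ((C.card : ℝ) - S.card) * m := by
    linarith
  have hAm : (S.card : ℝ) * m ≤ ∑ v ∈ S, f v := by
    have := Finset.card_nsmul_le_sum S f m (fun w hw => hmin w hw)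
    simpa [nsmul_eq_mul] using this
  have hC' : (1 - 2*ε) * (C.card : ℝ) ≤ ∑ v ∈ C, f v := by
    have h1 : (1/(C.card:ℝ)) * (∑ v ∈ C, f v) * C.card = ∑ v ∈ C, f v := by
      field_simp
    nlinarith [mul_le_mul_of_nonneg_right hCavg hCpos.le]
  have key : (1 - 2*ε) * (S.card : ℝ) ≤ ∑ v ∈ S, f v := by
    have t1 := mul_le_mul_of_nonneg_right hC' hSpos.le
    have t2 := mul_le_mul_of_nonneg_right hBA hSpos.le
    have t3 := mul_le_mul_of_nonneg_left hAm (sub_nonneg.mpr hsc)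
    have t5 : ((1 - 2*ε) * (S.card : ℝ)) * C.card ≤ (∑ v ∈ S, f v) * C.card := by
      linarith [t1, t2, t3]
    exact le_of_mul_le_mul_right t5 hCpos
  have part1 : 1 - 2 * ε ≤ (1 / (S.card : ℝ)) * ∑ v ∈ S, f v := by
    have h2 : (1 / (S.card : ℝ)) * ∑ v ∈ S, f v = (∑ v ∈ S, f v) / S.card := by
      ring
    rw [h2, le_div_iff₀ hSpos]
    linarith
  refine ⟨part1, ?_⟩
  -- f v ≤ 1 - 1/|Γ| for v ∈ Γ
  have hfbd : ∀ v ∈ Γ, f v ≤ 1 - 1/(Γ.card : ℝ) := by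
    intro v hv
    have hsub : nbrsIn G v Γ ⊆ Γ.erase v := by
      intro w hw
      rw [nbrsIn, Finset.mem_filter] at hw
      rw [Finset.mem_erase]
      exact ⟨fun h => G.loopless.irrefl v (h ▸ hw.2), hw.1⟩
    have hle : ((nbrsIn G v Γ).card : ℝ) ≤ (Γ.card : ℝ) - 1 := by
      have h1 := Finset.card_le_card hsub
      have h2 := Finset.card_erase_of_mem hv
      have h3 : 1 ≤ Γ.card := Finset.card_pos.mpr hΓne
      have : ((nbrsIn G v Γ).card : ℝ) ≤ ((Γ.card - 1 : ℕ) : ℝ) := by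
        exact_mod_cast h2 ▸ h1
      rwa [Nat.cast_sub h3, Nat.cast_one] at this
    rw [hf v, div_le_iff₀ hγpos]
    have : (1 - 1/(Γ.card : ℝ)) * Γ.card = (Γ.card : ℝ) - 1 := by
      field_simp
    linarith
  -- hypotheses force 1 ≤ 2ε|Γ|
  have hεγ : 1 ≤ 2 * ε * (Γ.card : ℝ) := by
    have hsum : ∑ v ∈ C, f v ≤ (C.card : ℝ) * (1 - 1/(Γ.card : ℝ)) := by
      have := Finset.sum_le_card_nsmul C f (1 - 1/(Γ.card : ℝ))
        (fun w hw => hfbd w (hCΓ hw))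
      simpa [nsmul_eq_mul] using this
    have h1 : (1 - 2*ε) * (C.card : ℝ) ≤ (C.card : ℝ) * (1 - 1/(Γ.card:ℝ)) :=
      le_trans hC' hsum
    have h2 : 1 - 2*ε ≤ 1 - 1/(Γ.card:ℝ) :=
      le_of_mul_le_mul_right (by linarith) hCpos
    have h3 : 1/(Γ.card:ℝ) ≤ 2*ε := by linarith
    rwa [div_le_iff₀ hγpos] at h3
  by_cases hcase : ρ ≤ 2 * ε
  · -- density RHS is ≤ 0 ≤ LHS
    have h1 : 1 - 2 * ε / ρ ≤ 0 := by
      rw [sub_nonpos, le_div_iff₀ hρ0, one_mul]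
      exact hcase
    have hS1 : (1:ℝ) ≤ S.card := by
      have : 1 ≤ S.card := Finset.card_pos.mpr hSne
      exact_mod_cast this
    have h2 : (0:ℝ) ≤ ((edgesIn G S).card : ℝ) / ((S.card : ℝ) * ((S.card : ℝ) - 1) / 2) := by
      apply div_nonneg (Nat.cast_nonneg _)
      have : (0:ℝ) ≤ (S.card : ℝ) - 1 := by linarith
      have := mul_nonneg hSpos.le this
      linarith
    linarith
  · push_neg at hcase
    -- then |S| ≥ 2
    have hS2 : (2:ℝ) ≤ S.card := by
      have h1 : (1:ℝ) < S.card := by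
        calc (1:ℝ) ≤ 2 * ε * Γ.card := hεγ
          _ ≤ 2 * ε * n := by
              have := mul_le_mul_of_nonneg_left hγn (by positivity : (0:ℝ) ≤ 2*ε)
              linarith
          _ < ρ * n := mul_lt_mul_of_pos_right hcase hnpos
          _ = S.card := hScard.symm
      have : 1 < S.card := by exact_mod_cast h1
      exact_mod_cast this
    -- count edges
    have hcount : ∀ v ∈ S, f v * Γ.card ≤ ((nbrsIn G v S).card : ℝ) + ((Γ.card : ℝ) - S.card) := by
      intro v hv
      have hsub : nbrsIn G v Γ ⊆ nbrsIn G v S ∪ (Γ \ S) := by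
        intro w hw
        rw [nbrsIn, Finset.mem_filter] at hw
        rw [Finset.mem_union, nbrsIn, Finset.mem_filter, Finset.mem_sdiff]
        by_cases hwS : w ∈ S
        · exact Or.inl ⟨hwS, hw.2⟩
        · exact Or.inr ⟨hw.1, hwS⟩
      have h1 := (Finset.card_le_card hsub).trans (Finset.card_union_le _ _)
      have h2 : (Γ \ S).card = Γ.card - S.card := Finset.card_sdiff_of_subset hSΓ
      have h3 : S.card ≤ Γ.card := Finset.card_le_card hSΓ
      have h4 : ((nbrsIn G v Γ).card : ℝ) ≤ ((nbrsIn G v S).card : ℝ) + ((Γ.card : ℝ) - S.card) := by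
        rw [h2] at h1
        have := (Nat.cast_le (α := ℝ)).mpr h1
        push_cast [Nat.cast_sub h3] at this
        linarith
      have h5 : f v * Γ.card = ((nbrsIn G v Γ).card : ℝ) := by
        rw [hf v]
        field_simp
      linarith
    have hsum2 : ∑ v ∈ S, f v * (Γ.card : ℝ)
        ≤ (2 * (edgesIn G S).card : ℝ) + (S.card : ℝ) * ((Γ.card : ℝ) - S.card) := by
      calc ∑ v ∈ S, f v * (Γ.card : ℝ)
          ≤ ∑ v ∈ S, (((nbrsIn G v S).card : ℝ) + ((Γ.card : ℝ) - S.card)) :=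
            Finset.sum_le_sum hcount
        _ = (∑ v ∈ S, ((nbrsIn G v S).card : ℝ)) + (S.card : ℝ) * ((Γ.card : ℝ) - S.card) := by
            rw [Finset.sum_add_distrib, Finset.sum_const, nsmul_eq_mul]
        _ = (2 * (edgesIn G S).card : ℝ) + (S.card : ℝ) * ((Γ.card : ℝ) - S.card) := by
            congr 1
            have := handshakeS G S
            exact_mod_cast congrArg (Nat.cast (R := ℝ)) this
    obtain ⟨E, hE⟩ : ∃ E : ℝ, E = ((edgesIn G S).card : ℝ) := ⟨_, rfl⟩
    rw [← hE] at hsum2 ⊢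
    clear hE
    have hEdge : (S.card : ℝ)^2 - 2 * ε * (S.card : ℝ) * n ≤ 2 * E := by
      have hsumf : (1 - 2*ε) * (S.card : ℝ) * (Γ.card : ℝ) ≤ ∑ v ∈ S, f v * (Γ.card : ℝ) := by
        rw [← Finset.sum_mul]
        have := mul_le_mul_of_nonneg_right key hγpos.le
        linarith
      have h7 : 2*ε*(S.card:ℝ) * (Γ.card:ℝ) ≤ 2*ε*(S.card:ℝ) * n :=
        mul_le_mul_of_nonneg_left hγn (mul_nonneg (by linarith) hSpos.le)
      linarith [hsum2, hsumf, h7]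
    exact final_algebra ρ ε n (S.card : ℝ) E hρ0 hnpos hcase hScard hS2 hEdge
end

section
/- There is a universal constant c>0 such that the following holds. Let 𝒢 be a free game with vertex sets X, Y, alphabet Σ, and constraints {π_e}; let S ⊆ X, γ > 0, and let k be a positive integer. For each h : S→Σ fix an induced labeling f_{S,h,Y} : Y→Σ, and for x ∈ X set g_{S,h,x} := max_{σ∈Σ} of the fraction of y ∈ Y with (σ, f_{S,h,Y}(y)) ∈ π_{(x,y)}; set bias_{S,h} := (1/|X|)·Σ_{x∈X} g_{S,h,x} and, for X' ⊆ X, bias_{S,h}^{X'} := (1/|X'|)·Σ_{x∈X'} g_{S,h,x}. If X' ⊆ X is a uniformly random subset of size ⌈(k + |S|·log|Σ|)/γ²⌉ (natural logarithm; assume this is at most |X|), then with probability at least 1 − e^{−ck}, for every h : S→Σ one has |bias_{S,h}^{X'} − bias_{S,h}| ≤ γ. -/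
open Finset

section SamplingHelpers

/-- `(1-x)^j (1+jx) ≤ 1` for `x ∈ [0,1]`. -/
lemma key_pow (j : ℕ) {x : ℝ} (h0 : 0 ≤ x) (h1 : x ≤ 1) :
    (1 - x) ^ j * (1 + (j : ℝ) * x) ≤ 1 := by
  induction j with
  | zero => simp
  | succ j ih =>
    have h2 : (0:ℝ) ≤ 1 - x := by linarith
    have h3 : (1 - x) * (1 + ((j:ℝ)+1) * x) ≤ 1 + (j:ℝ) * x := by nlinarith [sq_nonneg x]
    calc (1 - x) ^ (j+1) * (1 + ((j+1 : ℕ) : ℝ) * x)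
        = (1 - x)^j * ((1-x) * (1 + ((j:ℝ)+1)*x)) := by push_cast; ring
      _ ≤ (1 - x)^j * (1 + (j:ℝ)*x) :=
          mul_le_mul_of_nonneg_left h3 (pow_nonneg h2 j)
      _ ≤ 1 := ih

/-- Key binomial-coefficient algebra step for the Maclaurin induction. -/
lemma choose_algebra (n m' : ℕ) (hn : 2 ≤ n) (hmn : m' + 1 ≤ n)
    {x : ℝ} (hx0 : 0 ≤ x) (hx1 : x ≤ 1) :
    ((n-1).choose (m'+1) : ℝ) * (1-x)^(m'+1)
      + (1 + ((n:ℝ)-1)*x) * ((n-1).choose m' : ℝ) * (1-x)^m'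
      ≤ (n.choose (m'+1) : ℝ) := by
  have hm'n : m' ≤ n - 1 := by omega
  have h1n : 1 ≤ n := by omega
  have h1 : ((m':ℝ)+1) * ((n-1).choose (m'+1) : ℝ) = ((n:ℝ) - (m'+1)) * ((n-1).choose m' : ℝ) := by
    have := Nat.choose_succ_right_eq (n-1) m'
    have hc : (((n-1).choose (m'+1) * (m'+1) : ℕ) : ℝ) = (((n-1).choose m' * ((n-1) - m') : ℕ) : ℝ) := by
      exact_mod_cast congrArg (Nat.cast (R := ℝ)) this
    push_cast [Nat.cast_sub hm'n, Nat.cast_sub h1n] at hc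
    linarith [hc]
  have h2 : ((m':ℝ)+1) * (n.choose (m'+1) : ℝ) = (n:ℝ) * ((n-1).choose m' : ℝ) := by
    have := Nat.add_one_mul_choose_eq (n-1) m'
    have hnn : n - 1 + 1 = n := by omega
    rw [hnn] at this
    have hc : ((n * (n-1).choose m' : ℕ) : ℝ) = ((n.choose (m'+1) * (m'+1) : ℕ) : ℝ) := by
      exact_mod_cast congrArg (Nat.cast (R := ℝ)) this
    push_cast at hc
    linarith [hc]
  have key := key_pow m' hx0 hx1
  have hB : (0:ℝ) ≤ ((n-1).choose m' : ℝ) := by positivity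
  have hmpos : (0:ℝ) < (m':ℝ) + 1 := by positivity
  rw [← mul_le_mul_iff_right₀ hmpos]
  have expand : ((m':ℝ)+1) * (((n-1).choose (m'+1) : ℝ) * (1-x)^(m'+1)
      + (1 + ((n:ℝ)-1)*x) * ((n-1).choose m' : ℝ) * (1-x)^m')
      = (n:ℝ) * ((n-1).choose m' : ℝ) * ((1-x)^m' * (1 + (m':ℝ)*x)) := by
    rw [pow_succ]
    linear_combination ((1-x)^m' * (1-x)) * h1
  rw [expand, h2]
  calc (n:ℝ) * ((n-1).choose m' : ℝ) * ((1-x)^m' * (1 + (m':ℝ)*x))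
      ≤ (n:ℝ) * ((n-1).choose m' : ℝ) * 1 :=
        mul_le_mul_of_nonneg_left key (by positivity)
    _ = (n:ℝ) * ((n-1).choose m' : ℝ) := by ring

/-- The inductive step of the Maclaurin-type inequality, as pure algebra. -/
lemma esymm_step (n m : ℕ) (hn2 : 2 ≤ n) {s c : ℝ} (hs : 0 < s)
    (hc1 : s/(n:ℝ) ≤ c) (hc2 : c ≤ s) :
    ((n-1).choose (m+1) : ℝ) * ((s - c)/((n:ℝ)-1)) ^ (m+1)
      + c * (((n-1).choose m : ℝ) * ((s - c)/((n:ℝ)-1)) ^ m)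
    ≤ (n.choose (m+1) : ℝ) * (s/(n:ℝ))^(m+1) := by
  by_cases hbig : n < m + 1
  · have e1 : (n-1).choose (m+1) = 0 := Nat.choose_eq_zero_of_lt (by omega)
    have e2 : (n-1).choose m = 0 := Nat.choose_eq_zero_of_lt (by omega)
    have e3 : n.choose (m+1) = 0 := Nat.choose_eq_zero_of_lt (by omega)
    rw [e1, e2, e3]; simp
  push_neg at hbig
  have hnR : (1:ℝ) < (n:ℝ) := by exact_mod_cast hn2
  have hn0 : (n:ℝ) ≠ 0 := by positivity
  have hn1R : (0:ℝ) < (n:ℝ) - 1 := by linarith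
  have hc0 : 0 ≤ c := le_trans (by positivity) hc1
  have hcn : s ≤ c * n := by
    rw [div_le_iff₀ (by linarith : (0:ℝ) < (n:ℝ))] at hc1; linarith
  have hx0 : 0 ≤ (c*(n:ℝ) - s)/(s*((n:ℝ)-1)) := by
    apply div_nonneg (by linarith) (by positivity)
  have hx1 : (c*(n:ℝ) - s)/(s*((n:ℝ)-1)) ≤ 1 := by
    rw [div_le_one (by positivity)]
    nlinarith
  set x : ℝ := (c*(n:ℝ) - s)/(s*((n:ℝ)-1)) with hxdef
  have hq : (s - c)/((n:ℝ)-1) = (s/(n:ℝ)) * (1 - x) := by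
    rw [hxdef]; field_simp; ring
  have hcx : c = (s/(n:ℝ)) * (1 + ((n:ℝ)-1)*x) := by
    rw [hxdef]; field_simp; ring
  have halg := choose_algebra n m hn2 hbig hx0 hx1
  have hμ0 : (0:ℝ) ≤ s/(n:ℝ) := by positivity
  calc ((n-1).choose (m+1) : ℝ) * ((s - c)/((n:ℝ)-1)) ^ (m+1)
        + c * (((n-1).choose m : ℝ) * ((s - c)/((n:ℝ)-1)) ^ m)
      = (s/(n:ℝ))^(m+1) * (((n-1).choose (m+1) : ℝ) * (1-x)^(m+1)
          + (1 + ((n:ℝ)-1)*x) * ((n-1).choose m : ℝ) * (1-x)^m) := by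
        rw [hq]; conv_lhs => rw [hcx]
        rw [mul_pow, mul_pow]; ring
    _ ≤ (s/(n:ℝ))^(m+1) * (n.choose (m+1) : ℝ) :=
        mul_le_mul_of_nonneg_left halg (pow_nonneg hμ0 _)
    _ = (n.choose (m+1) : ℝ) * (s/(n:ℝ))^(m+1) := by ring

/-- Maclaurin-type inequality: average of products over `m`-subsets is at most `mean^m`. -/
lemma esymm_le {ι : Type*} [DecidableEq ι] (w : ι → ℝ) :
    ∀ (T : Finset ι), (∀ i ∈ T, 0 ≤ w i) → ∀ m : ℕ,
    ∑ P ∈ T.powersetCard m, ∏ i ∈ P, w i ≤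
      (T.card.choose m : ℝ) * ((∑ i ∈ T, w i) / T.card) ^ m := by
  intro T
  induction T using Finset.strongInduction with
  | _ T IH =>
  intro hw m
  match m with
  | 0 => simp
  | Nat.succ m =>
  rcases T.eq_empty_or_nonempty with rfl | hT
  · have h2 : Finset.powersetCard (m+1) (∅ : Finset ι) = ∅ :=
      Finset.powersetCard_eq_empty.2 (by simp)
    rw [h2]; simp
  -- nonempty T
  by_cases hs : ∑ i ∈ T, w i = 0
  · -- all weights vanish on T
    have hz : ∀ i ∈ T, w i = 0 := (Finset.sum_eq_zero_iff_of_nonneg hw).1 hs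
    have hL : ∑ P ∈ T.powersetCard (m+1), ∏ i ∈ P, w i = 0 := by
      apply Finset.sum_eq_zero
      intro P hP
      rw [Finset.mem_powersetCard] at hP
      obtain ⟨hPT, hPc⟩ := hP
      have hPne : P.Nonempty := Finset.card_pos.1 (by omega)
      obtain ⟨i, hi⟩ := hPne
      exact Finset.prod_eq_zero hi (hz i (hPT hi))
    rw [hL, hs]
    have : ((0:ℝ) / T.card) ^ (m+1) = 0 := by
      rw [zero_div, zero_pow]; omega
    rw [this, mul_zero]
  -- positive total weight
  obtain ⟨t, ht, htmax⟩ := Finset.exists_max_image T w hT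
  have hwt0 : 0 ≤ w t := hw t ht
  set T' := T.erase t with hT'
  have htT' : t ∉ T' := Finset.notMem_erase t T
  have hins : insert t T' = T := Finset.insert_erase ht
  have hw' : ∀ i ∈ T', 0 ≤ w i := fun i hi => hw i (Finset.mem_of_mem_erase hi)
  have hT'card : T'.card = T.card - 1 := Finset.card_erase_of_mem ht
  have hss : T' ⊂ T := Finset.erase_ssubset ht
  have hdecomp : ∑ P ∈ T.powersetCard (m+1), ∏ i ∈ P, w i
      = (∑ P ∈ T'.powersetCard (m+1), ∏ i ∈ P, w i)
        + w t * ∑ P ∈ T'.powersetCard m, ∏ i ∈ P, w i := by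
    conv_lhs => rw [← hins]
    rw [Finset.powersetCard_succ_insert htT']
    rw [Finset.sum_union]
    · congr 1
      rw [Finset.sum_image, Finset.mul_sum]
      · apply Finset.sum_congr rfl
        intro P hP
        rw [Finset.mem_powersetCard] at hP
        have htP : t ∉ P := fun h => htT' (hP.1 h)
        rw [Finset.prod_insert htP]
      · intro P hP Q hQ hPQ
        rw [Finset.mem_coe, Finset.mem_powersetCard] at hP hQ
        have htP : t ∉ P := fun h => htT' (hP.1 h)
        have htQ : t ∉ Q := fun h => htT' (hQ.1 h)
        have := congrArg (Finset.erase · t) hPQ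
        simpa [Finset.erase_insert htP, Finset.erase_insert htQ] using this
    · rw [Finset.disjoint_left]
      intro P hP hP'
      rw [Finset.mem_powersetCard] at hP
      obtain ⟨Q, hQ, rfl⟩ := Finset.mem_image.1 hP'
      exact (fun h => htT' (hP.1 h)) (Finset.mem_insert_self t Q)
  set n := T.card with hn
  have hn1 : 1 ≤ n := Finset.card_pos.2 hT
  set s := ∑ i ∈ T, w i with hsdef
  have hspos : 0 < s := lt_of_le_of_ne (Finset.sum_nonneg hw) (Ne.symm hs)
  have hs' : ∑ i ∈ T', w i = s - w t := by
    rw [hT', Finset.sum_erase_eq_sub ht]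
  have hs'0 : 0 ≤ s - w t := by
    rw [← hs']; exact Finset.sum_nonneg hw'
  have hwts : w t ≤ s := by linarith
  have hmean : s / n ≤ w t := by
    rw [div_le_iff₀ (by exact_mod_cast hn1)]
    have : s ≤ n • w t := Finset.sum_le_card_nsmul T w (w t) (fun i hi => htmax i hi)
    simpa [nsmul_eq_mul, mul_comm] using this
  rcases eq_or_lt_of_le hn1 with hn1' | hn2
  · -- n = 1
    have hT'empty : T' = ∅ := by rw [← Finset.card_eq_zero]; omega
    have hneq : n = 1 := hn1'.symm
    rw [hdecomp, hT'empty]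
    match m with
    | 0 =>
      have h2 : Finset.powersetCard 1 (∅ : Finset ι) = ∅ :=
        Finset.powersetCard_eq_empty.2 (by simp)
      rw [h2, Finset.powersetCard_zero, hneq]
      simp only [Finset.sum_empty, Finset.sum_singleton, Finset.prod_empty, mul_one, zero_add]
      norm_num
      linarith [hwts]
    | Nat.succ m =>
      have h2 : Finset.powersetCard (m+2) (∅ : Finset ι) = ∅ :=
        Finset.powersetCard_eq_empty.2 (by simp)
      have h3 : Finset.powersetCard (m+1) (∅ : Finset ι) = ∅ :=
        Finset.powersetCard_eq_empty.2 (by simp)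
      rw [h2, h3, hneq]
      simp [Nat.choose_eq_zero_of_lt (by omega : 1 < m + 2)]
  · -- n ≥ 2
    have hn2' : (2:ℕ) ≤ n := hn2
    have hT'c : T'.card = n - 1 := by rw [hT'card]
    have ih1 := IH T' hss hw' (m+1)
    have ih2 := IH T' hss hw' m
    rw [hT'c, hs'] at ih1 ih2
    have hcast : (((n-1 : ℕ)):ℝ) = (n:ℝ) - 1 := by
      push_cast [Nat.cast_sub hn1]; ring
    rw [hcast] at ih1 ih2
    rw [hdecomp]
    calc (∑ P ∈ T'.powersetCard (m+1), ∏ i ∈ P, w i)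
          + w t * ∑ P ∈ T'.powersetCard m, ∏ i ∈ P, w i
        ≤ ((n-1).choose (m+1) : ℝ) * ((s - w t)/((n:ℝ)-1)) ^ (m+1)
          + w t * (((n-1).choose m : ℝ) * ((s - w t)/((n:ℝ)-1)) ^ m) :=
          add_le_add ih1 (mul_le_mul_of_nonneg_left ih2 hwt0)
      _ ≤ (n.choose (m+1) : ℝ) * (s/(n:ℝ))^(m+1) :=
          esymm_step n m hn2' hspos hmean hwts

lemma fact_ineq : ∀ k : ℕ, 1 ≤ k → 4^k * k.factorial ≤ 2 * (2*k).factorial := by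
  intro k
  induction k with
  | zero => omega
  | succ k ih =>
    intro _
    rcases Nat.eq_zero_or_pos k with rfl | hk1
    · decide
    · have hI := ih hk1
      have h2 : 2*(k+1) = (2*k+1)+1 := by ring
      rw [h2, Nat.factorial_succ, Nat.factorial_succ, pow_succ, Nat.factorial_succ]
      calc 4^k * 4 * ((k+1) * k.factorial) = (4*(k+1)) * (4^k * k.factorial) := by ring
        _ ≤ (4*(k+1)) * (2 * (2*k).factorial) := Nat.mul_le_mul_left _ hI
        _ ≤ ((2*k+1+1) * (2*k+1)) * (2 * (2*k).factorial) := by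
            apply Nat.mul_le_mul_right
            nlinarith
        _ = 2 * ((2*k+1+1) * ((2*k+1) * (2*k).factorial)) := by ring

lemma exp_tsum (y : ℝ) : Real.exp y = ∑' j : ℕ, y^j / (j.factorial : ℝ) := by
  rw [Real.exp_eq_exp_ℝ, NormedSpace.exp_eq_tsum_div]

section DS
variable {ι : Type*} [Fintype ι]

lemma sum_sq_diff_le (g : ι → ℝ) (hg0 : ∀ i, 0 ≤ g i) (hg1 : ∀ i, g i ≤ 1) :
    ∑ p : ι × ι, (g p.1 - g p.2)^2 ≤ (Fintype.card ι : ℝ)^2/2 := by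
  have e1 : ∀ x : ι, ∑ x' : ι, (g x - g x')^2
      = (Fintype.card ι : ℝ) * (g x)^2 - 2 * g x * (∑ x' : ι, g x') + ∑ x' : ι, (g x')^2 := by
    intro x
    have h : ∀ x' ∈ (univ : Finset ι), (g x - g x')^2
        = (g x)^2 - 2 * g x * g x' + (g x')^2 := fun x' _ => by ring
    rw [Finset.sum_congr rfl h, Finset.sum_add_distrib, Finset.sum_sub_distrib,
      Finset.sum_const, Finset.card_univ, nsmul_eq_mul, ← Finset.mul_sum]
  have e2 : ∑ p : ι × ι, (g p.1 - g p.2)^2 = ∑ x : ι, ∑ x' : ι, (g x - g x')^2 := by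
    exact Fintype.sum_prod_type (f := fun p : ι × ι => (g p.1 - g p.2)^2)
  rw [e2, Finset.sum_congr rfl (fun x _ => e1 x), Finset.sum_add_distrib,
    Finset.sum_sub_distrib, ← Finset.mul_sum, Finset.sum_const, Finset.card_univ, nsmul_eq_mul]
  have hsum_mul : ∑ x : ι, 2 * g x * (∑ x' : ι, g x') = 2 * (∑ x : ι, g x)^2 := by
    rw [← Finset.sum_mul]
    have : ∑ x : ι, 2 * g x = 2 * ∑ x : ι, g x := by
      rw [← Finset.mul_sum]
    rw [this]; ring
  rw [hsum_mul]
  have hQS : ∑ x : ι, (g x)^2 ≤ ∑ x : ι, g x :=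
    Finset.sum_le_sum (fun x _ => by nlinarith [hg0 x, hg1 x])
  have hS0 : 0 ≤ ∑ x : ι, g x := Finset.sum_nonneg (fun x _ => hg0 x)
  have hSn : ∑ x : ι, g x ≤ (Fintype.card ι : ℝ) := by
    calc ∑ x : ι, g x ≤ ∑ _x : ι, (1:ℝ) := Finset.sum_le_sum (fun x _ => hg1 x)
      _ = (Fintype.card ι : ℝ) := by simp [Finset.card_univ]
  have hQ0 : 0 ≤ ∑ x : ι, (g x)^2 := Finset.sum_nonneg (fun x _ => by positivity)
  nlinarith [sq_nonneg (2 * (∑ x : ι, g x) - (Fintype.card ι : ℝ))]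

/-- Symmetrized MGF bound. -/
lemma double_sum_exp_le (g : ι → ℝ) (hg0 : ∀ i, 0 ≤ g i) (hg1 : ∀ i, g i ≤ 1) (L : ℝ) :
    ∑ p : ι × ι, Real.exp (L * (g p.1 - g p.2)) ≤
      ((Fintype.card ι : ℝ))^2 * Real.exp (L^2/4) := by
  set F : ℕ → ℝ := fun j => (∑ p : ι × ι, (L * (g p.1 - g p.2))^j) / (j.factorial : ℝ) with hF
  have hsummand : ∀ p : ι × ι, Summable (fun j : ℕ => (L * (g p.1 - g p.2))^j / (j.factorial : ℝ)) :=
    fun p => Real.summable_pow_div_factorial _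
  have hLHS : ∑ p : ι × ι, Real.exp (L * (g p.1 - g p.2)) = ∑' j : ℕ, F j := by
    rw [Finset.sum_congr rfl (fun p _ => exp_tsum (L * (g p.1 - g p.2)))]
    rw [← Summable.tsum_finsetSum (fun p _ => hsummand p)]
    exact tsum_congr (fun j => by simp only [hF, Finset.sum_div])
  -- odd terms vanish
  have hodd : ∀ k : ℕ, F (2*k+1) = 0 := by
    intro k
    have hswap : ∑ p : ι × ι, (L * (g p.1 - g p.2))^(2*k+1)
        = ∑ p : ι × ι, (L * (g p.2 - g p.1))^(2*k+1) := by
      apply Fintype.sum_equiv (Equiv.prodComm ι ι)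
      intro p
      rfl
    have hneg : ∀ p : ι × ι, (L * (g p.2 - g p.1))^(2*k+1)
        = -(L * (g p.1 - g p.2))^(2*k+1) := by
      intro p
      rw [show L * (g p.2 - g p.1) = -(L * (g p.1 - g p.2)) by ring]
      exact Odd.neg_pow ⟨k, by ring⟩ _
    have hzero : ∑ p : ι × ι, (L * (g p.1 - g p.2))^(2*k+1) = 0 := by
      have h1 : ∑ p : ι × ι, (L * (g p.1 - g p.2))^(2*k+1)
          = -∑ p : ι × ι, (L * (g p.1 - g p.2))^(2*k+1) := by
        conv_lhs => rw [hswap, Finset.sum_congr rfl (fun p _ => hneg p)]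
        rw [Finset.sum_neg_distrib]
      linarith
    rw [hF]
    simp only [hzero, zero_div]
  -- even terms bound
  have hterm : ∀ k : ℕ, F (2*k) ≤ (Fintype.card ι : ℝ)^2 * ((L^2/4)^k / (k.factorial : ℝ)) := by
    intro k
    match k with
    | 0 =>
      rw [hF]
      simp [Fintype.card_prod, sq]
    | Nat.succ k =>
      have hk1 : 1 ≤ k + 1 := by omega
      have hP : (0:ℝ) ≤ L^(2*(k+1)) := (even_two_mul (k+1)).pow_nonneg _
      have hb : ∑ p : ι × ι, (L * (g p.1 - g p.2))^(2*(k+1))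
          ≤ L^(2*(k+1)) * ((Fintype.card ι : ℝ)^2/2) := by
        have hp : ∀ p : ι × ι, (L * (g p.1 - g p.2))^(2*(k+1))
            ≤ L^(2*(k+1)) * (g p.1 - g p.2)^2 := by
          intro p
          rw [mul_pow]
          apply mul_le_mul_of_nonneg_left _ hP
          have hd1 : (g p.1 - g p.2)^2 ≤ 1 := by
            nlinarith [hg0 p.1, hg1 p.1, hg0 p.2, hg1 p.2]
          calc (g p.1 - g p.2)^(2*(k+1)) = ((g p.1 - g p.2)^2)^(k+1) := by rw [← pow_mul]
            _ ≤ ((g p.1 - g p.2)^2)^1 := pow_le_pow_of_le_one (by positivity) hd1 hk1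
            _ = (g p.1 - g p.2)^2 := pow_one _
        calc ∑ p : ι × ι, (L * (g p.1 - g p.2))^(2*(k+1))
            ≤ ∑ p : ι × ι, L^(2*(k+1)) * (g p.1 - g p.2)^2 :=
              Finset.sum_le_sum (fun p _ => hp p)
          _ = L^(2*(k+1)) * ∑ p : ι × ι, (g p.1 - g p.2)^2 := by rw [Finset.mul_sum]
          _ ≤ L^(2*(k+1)) * ((Fintype.card ι : ℝ)^2/2) :=
              mul_le_mul_of_nonneg_left (sum_sq_diff_le g hg0 hg1) hP
      have hfac : (4:ℝ)^(k+1) * (((k+1).factorial : ℕ) : ℝ) ≤ 2 * (((2*(k+1)).factorial : ℕ) : ℝ) := by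
        exact_mod_cast fact_ineq (k+1) hk1
      have ha : (0:ℝ) < (((2*(k+1)).factorial : ℕ) : ℝ) := by positivity
      have hb' : (0:ℝ) < (4:ℝ)^(k+1) * (((k+1).factorial : ℕ) : ℝ) := by positivity
      have hRHSeq : (Fintype.card ι : ℝ)^2 * ((L^2/4)^(k+1) / (((k+1).factorial : ℕ) : ℝ))
          = (Fintype.card ι : ℝ)^2 * L^(2*(k+1)) / ((4:ℝ)^(k+1) * (((k+1).factorial : ℕ) : ℝ)) := by
        rw [div_pow, ← pow_mul]
        field_simp
      rw [hF]
      rw [hRHSeq]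
      calc (∑ p : ι × ι, (L * (g p.1 - g p.2))^(2*(k+1))) / (((2*(k+1)).factorial : ℕ) : ℝ)
          ≤ (L^(2*(k+1)) * ((Fintype.card ι : ℝ)^2/2)) / (((2*(k+1)).factorial : ℕ) : ℝ) :=
            by gcongr
        _ ≤ (Fintype.card ι : ℝ)^2 * L^(2*(k+1)) / ((4:ℝ)^(k+1) * (((k+1).factorial : ℕ) : ℝ)) := ?_
      · rw [div_le_div_iff₀ ha hb']
        nlinarith [mul_le_mul_of_nonneg_left hfac (mul_nonneg hP (by positivity :
            (0:ℝ) ≤ (Fintype.card ι : ℝ)^2/2))]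
  -- assemble via tsum
  have hFeven_nonneg : ∀ k : ℕ, 0 ≤ F (2*k) := by
    intro k
    rw [hF]
    apply div_nonneg _ (by positivity)
    apply Finset.sum_nonneg
    intro p _
    exact (even_two_mul k).pow_nonneg _
  have hRHSsummable : Summable (fun k : ℕ => (Fintype.card ι : ℝ)^2 * ((L^2/4)^k / (k.factorial : ℝ))) :=
    (Real.summable_pow_div_factorial (L^2/4)).mul_left _
  have hFeven_summable : Summable (fun k : ℕ => F (2*k)) :=
    Summable.of_nonneg_of_le hFeven_nonneg hterm hRHSsummable
  have hFodd_summable : Summable (fun k : ℕ => F (2*k+1)) := by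
    have : (fun k : ℕ => F (2*k+1)) = fun _ => (0:ℝ) := funext hodd
    rw [this]; exact summable_zero
  have hsplit := tsum_even_add_odd hFeven_summable hFodd_summable
  have hodd0 : ∑' k : ℕ, F (2*k+1) = 0 := by
    rw [tsum_congr hodd]; exact tsum_zero
  rw [hLHS, ← hsplit, hodd0, add_zero]
  calc ∑' k : ℕ, F (2*k) ≤ ∑' k : ℕ, (Fintype.card ι : ℝ)^2 * ((L^2/4)^k / (k.factorial : ℝ)) :=
        Summable.tsum_le_tsum hterm hFeven_summable hRHSsummable
    _ = (Fintype.card ι : ℝ)^2 * Real.exp (L^2/4) := by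
        rw [tsum_mul_left, ← exp_tsum]
end DS

section DS
variable {ι : Type*} [Fintype ι]

/-- Centered exponential-moment bound for the uniform measure on a finite type. -/
lemma sum_exp_centered_le (hc : 0 < Fintype.card ι) (g : ι → ℝ)
    (hg0 : ∀ i, 0 ≤ g i) (hg1 : ∀ i, g i ≤ 1) (L : ℝ) :
    ∑ x : ι, Real.exp (L * (g x - (∑ x' : ι, g x') / (Fintype.card ι : ℝ)))
      ≤ (Fintype.card ι : ℝ) * Real.exp (L^2/4) := by
  have hn0 : (0:ℝ) < (Fintype.card ι : ℝ) := by exact_mod_cast hc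
  -- Jensen (AM-GM) step
  have hJ : Real.exp (-(L * ((∑ x' : ι, g x') / (Fintype.card ι : ℝ))))
      ≤ (∑ x' : ι, Real.exp (-(L * g x'))) / (Fintype.card ι : ℝ) := by
    have h := Real.geom_mean_le_arith_mean_weighted (univ : Finset ι)
      (fun _ => 1 / (Fintype.card ι : ℝ)) (fun x' => Real.exp (-(L * g x')))
      (fun i _ => by positivity)
      (by rw [Finset.sum_const, Finset.card_univ, nsmul_eq_mul]; field_simp)
      (fun i _ => (Real.exp_pos _).le)
    have hL : ∀ x' : ι, Real.exp (-(L * g x')) ^ ((1:ℝ) / (Fintype.card ι : ℝ))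
        = Real.exp (-(L * g x') * (1 / (Fintype.card ι : ℝ))) := by
      intro x'
      rw [Real.rpow_def_of_pos (Real.exp_pos _), Real.log_exp]
    rw [Finset.prod_congr rfl (fun x' _ => hL x'), ← Real.exp_sum] at h
    have he : ∑ x' : ι, -(L * g x') * (1 / (Fintype.card ι : ℝ))
        = -(L * ((∑ x' : ι, g x') / (Fintype.card ι : ℝ))) := by
      rw [← Finset.sum_mul, Finset.sum_neg_distrib, ← Finset.mul_sum]
      ring
    rw [he] at h
    refine h.trans (le_of_eq ?_)
    rw [eq_div_iff (ne_of_gt hn0), Finset.sum_mul]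
    exact Finset.sum_congr rfl (fun x' _ => by field_simp)
  calc ∑ x : ι, Real.exp (L * (g x - (∑ x' : ι, g x') / (Fintype.card ι : ℝ)))
      = ∑ x : ι, Real.exp (L * g x) * Real.exp (-(L * ((∑ x' : ι, g x') / (Fintype.card ι : ℝ)))) := by
        apply Finset.sum_congr rfl
        intro x _
        rw [← Real.exp_add]
        congr 1
        ring
    _ ≤ ∑ x : ι, Real.exp (L * g x) * ((∑ x' : ι, Real.exp (-(L * g x'))) / (Fintype.card ι : ℝ)) := by
        apply Finset.sum_le_sum
        intro x _
        exact mul_le_mul_of_nonneg_left hJ (Real.exp_pos _).le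
    _ = (∑ p : ι × ι, Real.exp (L * (g p.1 - g p.2))) / (Fintype.card ι : ℝ) := by
        have e2 : ∑ p : ι × ι, Real.exp (L * (g p.1 - g p.2))
            = ∑ x : ι, ∑ x' : ι, Real.exp (L * (g x - g x')) := by
          exact Fintype.sum_prod_type (f := fun p : ι × ι => Real.exp (L * (g p.1 - g p.2)))
        rw [e2]
        have inner : ∀ x : ι, Real.exp (L * g x) *
            ((∑ x' : ι, Real.exp (-(L * g x'))) / (Fintype.card ι : ℝ))
            = (∑ x' : ι, Real.exp (L * (g x - g x'))) / (Fintype.card ι : ℝ) := by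
          intro x
          rw [← mul_div_assoc, Finset.mul_sum]
          congr 1
          exact Finset.sum_congr rfl (fun x' _ => by rw [← Real.exp_add]; congr 1; ring)
        rw [Finset.sum_congr rfl (fun x _ => inner x), ← Finset.sum_div]
    _ ≤ ((Fintype.card ι : ℝ)^2 * Real.exp (L^2/4)) / (Fintype.card ι : ℝ) := by
        gcongr
        exact double_sum_exp_le g hg0 hg1 L
    _ = (Fintype.card ι : ℝ) * Real.exp (L^2/4) := by
        field_simp
end DS

/-- Chernoff counting bound for sampling without replacement (upper tail). -/
lemma chernoff_count {ι : Type*} [Fintype ι] [DecidableEq ι] (g : ι → ℝ)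
    (hg0 : ∀ i, 0 ≤ g i) (hg1 : ∀ i, g i ≤ 1) (m : ℕ) (hm : 0 < m)
    (hmn : m ≤ Fintype.card ι) (γ : ℝ) (hγ : 0 < γ)
    (p : Finset ι → Prop) [DecidablePred p]
    (hp : ∀ P, p P → (m:ℝ)*γ + (m:ℝ) * ((∑ x : ι, g x)/(Fintype.card ι : ℝ)) ≤ ∑ x ∈ P, g x) :
    (((powersetCard m (univ : Finset ι)).filter p).card : ℝ) ≤
      Real.exp (-(m:ℝ)*γ^2) * (((Fintype.card ι).choose m : ℕ) : ℝ) := by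
  have hc : 0 < Fintype.card ι := lt_of_lt_of_le hm hmn
  have hnR : (0:ℝ) < (Fintype.card ι : ℝ) := by exact_mod_cast hc
  set μ : ℝ := (∑ x : ι, g x)/(Fintype.card ι : ℝ) with hμ
  set L : ℝ := 2*γ with hL
  set w : ι → ℝ := fun x => Real.exp (L * (g x - μ)) with hw
  -- MGF bound
  have hkey : ∑ x : ι, w x ≤ (Fintype.card ι : ℝ) * Real.exp (L^2/4) :=
    sum_exp_centered_le hc g hg0 hg1 L
  -- each subset in the filter contributes at least exp(L m γ)
  have h1 : ∀ P ∈ (powersetCard m (univ : Finset ι)).filter p,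
      Real.exp (L * ((m:ℝ)*γ)) ≤ ∏ x ∈ P, w x := by
    intro P hP
    rw [Finset.mem_filter] at hP
    obtain ⟨hPm, hPp⟩ := hP
    rw [Finset.mem_powersetCard] at hPm
    have hcard : P.card = m := hPm.2
    have hprod : ∏ x ∈ P, w x = Real.exp (∑ x ∈ P, L * (g x - μ)) := by
      rw [Real.exp_sum]
    rw [hprod]
    apply Real.exp_le_exp.2
    have hsum : ∑ x ∈ P, L * (g x - μ) = L * ((∑ x ∈ P, g x) - (m:ℝ) * μ) := by
      rw [← Finset.mul_sum, Finset.sum_sub_distrib, Finset.sum_const, hcard, nsmul_eq_mul]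
    rw [hsum]
    have := hp P hPp
    have hLpos : 0 < L := by rw [hL]; linarith
    apply mul_le_mul_of_nonneg_left _ hLpos.le
    linarith
  have h2 : ((((powersetCard m (univ : Finset ι)).filter p).card : ℝ)) * Real.exp (L * ((m:ℝ)*γ))
      ≤ ∑ P ∈ (powersetCard m (univ : Finset ι)).filter p, ∏ x ∈ P, w x := by
    have := Finset.card_nsmul_le_sum ((powersetCard m (univ : Finset ι)).filter p)
      (fun P => ∏ x ∈ P, w x) (Real.exp (L * ((m:ℝ)*γ))) h1
    simpa [nsmul_eq_mul] using this
  have h3 : ∑ P ∈ (powersetCard m (univ : Finset ι)).filter p, ∏ x ∈ P, w x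
      ≤ ∑ P ∈ powersetCard m (univ : Finset ι), ∏ x ∈ P, w x := by
    apply Finset.sum_le_sum_of_subset_of_nonneg (Finset.filter_subset _ _)
    intro P _ _
    exact Finset.prod_nonneg (fun x _ => (Real.exp_pos _).le)
  have h4 : ∑ P ∈ powersetCard m (univ : Finset ι), ∏ x ∈ P, w x
      ≤ (((Fintype.card ι).choose m : ℕ) : ℝ) * ((∑ x : ι, w x) / (Fintype.card ι : ℝ)) ^ m := by
    have := esymm_le w (univ : Finset ι) (fun i _ => (Real.exp_pos _).le) m
    rwa [Finset.card_univ] at this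
  have h5 : ((∑ x : ι, w x) / (Fintype.card ι : ℝ)) ^ m ≤ (Real.exp (L^2/4)) ^ m := by
    apply pow_le_pow_left₀
    · positivity
    · rw [div_le_iff₀ hnR]
      calc ∑ x : ι, w x ≤ (Fintype.card ι : ℝ) * Real.exp (L^2/4) := hkey
        _ = Real.exp (L^2/4) * (Fintype.card ι : ℝ) := by ring
  have hchain : ((((powersetCard m (univ : Finset ι)).filter p).card : ℝ)) * Real.exp (L * ((m:ℝ)*γ))
      ≤ (((Fintype.card ι).choose m : ℕ) : ℝ) * (Real.exp (L^2/4)) ^ m := by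
    calc ((((powersetCard m (univ : Finset ι)).filter p).card : ℝ)) * Real.exp (L * ((m:ℝ)*γ))
        ≤ ∑ P ∈ (powersetCard m (univ : Finset ι)).filter p, ∏ x ∈ P, w x := h2
      _ ≤ ∑ P ∈ powersetCard m (univ : Finset ι), ∏ x ∈ P, w x := h3
      _ ≤ (((Fintype.card ι).choose m : ℕ) : ℝ) * ((∑ x : ι, w x) / (Fintype.card ι : ℝ)) ^ m := h4
      _ ≤ (((Fintype.card ι).choose m : ℕ) : ℝ) * (Real.exp (L^2/4)) ^ m :=
          mul_le_mul_of_nonneg_left h5 (by positivity)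
  have hexp : (Real.exp (L^2/4)) ^ m = Real.exp ((m:ℝ) * (L^2/4)) := by
    rw [← Real.exp_nat_mul]
  have hfinal : ((((powersetCard m (univ : Finset ι)).filter p).card : ℝ))
      ≤ (((Fintype.card ι).choose m : ℕ) : ℝ) * Real.exp ((m:ℝ) * (L^2/4)) * Real.exp (-(L * ((m:ℝ)*γ))) := by
    rw [← hexp]
    have hEpos : 0 < Real.exp (L * ((m:ℝ)*γ)) := Real.exp_pos _
    rw [← mul_le_mul_iff_left₀ hEpos]
    calc ((((powersetCard m (univ : Finset ι)).filter p).card : ℝ)) * Real.exp (L * ((m:ℝ)*γ))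
        ≤ (((Fintype.card ι).choose m : ℕ) : ℝ) * (Real.exp (L^2/4)) ^ m := hchain
      _ = (((Fintype.card ι).choose m : ℕ) : ℝ) * (Real.exp (L^2/4)) ^ m
          * Real.exp (-(L * ((m:ℝ)*γ))) * Real.exp (L * ((m:ℝ)*γ)) := by
          rw [mul_assoc, mul_assoc, ← Real.exp_add]
          simp
  refine hfinal.trans (le_of_eq ?_)
  rw [mul_assoc, ← Real.exp_add]
  rw [mul_comm (Real.exp _)]
  congr 1
  rw [hL]
  ring

end SamplingHelpers

section FreeGames

variable {X Y A : Type*} [Fintype X] [Fintype Y] [Fintype A] [DecidableEq A]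

/-- `gY` is an induced labeling `f_{S,h,Y}`: for each `y`, the label `gY y` maximizes the
number of `s ∈ S` with `(h s, σ) ∈ π_{(s,y)}`. -/
def IsInducedY (π : X → Y → Finset (A × A)) (S : Finset X) (h : {x // x ∈ S} → A)
    (gY : Y → A) : Prop :=
  ∀ (y : Y) (σ : A),
    (S.attach.filter fun s : {x // x ∈ S} => (h s, σ) ∈ π s.1 y).card ≤
      (S.attach.filter fun s : {x // x ∈ S} => (h s, gY y) ∈ π s.1 y).card

/-- `g_{S,h,x}`: the maximum over `σ ∈ Σ` of the fraction of `y ∈ Y` with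
`(σ, gY y) ∈ π_{(x,y)}`, where `gY` is the fixed induced labeling `f_{S,h,Y}`. -/
noncomputable def gMax [Nonempty A] (π : X → Y → Finset (A × A)) (gY : Y → A) (x : X) : ℝ :=
  (Finset.univ : Finset A).sup' Finset.univ_nonempty fun σ =>
    (((Finset.univ : Finset Y).filter fun y => (σ, gY y) ∈ π x y).card : ℝ) /
      (Fintype.card Y : ℝ)

lemma gMax_nonneg [Nonempty A] (π : X → Y → Finset (A × A)) (gY : Y → A) (x : X) :
    0 ≤ gMax π gY x := by
  obtain ⟨σ⟩ := (inferInstance : Nonempty A)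
  refine le_trans ?_ (Finset.le_sup' _ (Finset.mem_univ σ))
  positivity

lemma gMax_le_one [Nonempty A] (π : X → Y → Finset (A × A)) (gY : Y → A) (x : X) :
    gMax π gY x ≤ 1 := by
  apply Finset.sup'_le
  intro σ _
  apply div_le_one_of_le₀
  · exact_mod_cast (Finset.card_filter_le _ _).trans_eq (Finset.card_univ)
  · positivity

open scoped Classical in
/-- there is a universal constant `c > 0` such that for a uniformly random
`X' ⊆ X` of size `⌈(k + |S|·log|Σ|)/γ²⌉`, with probability at least `1 - e^{-ck}`,
`|bias_{S,h}^{X'} - bias_{S,h}| ≤ γ` holds simultaneously for every `h : S → Σ`. -/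
theorem free_game_toss_sample :
    ∃ c : ℝ, 0 < c ∧
      ∀ (X Y A : Type) [Fintype X] [Fintype Y] [Fintype A] [DecidableEq A] [Nonempty A]
        (π : X → Y → Finset (A × A)) (S : Finset X) (γ : ℝ) (k : ℕ),
        0 < γ → 0 < k →
        ∀ F : ({x // x ∈ S} → A) → (Y → A), (∀ h, IsInducedY π S h (F h)) →
        ∀ m : ℕ,
          m = ⌈((k : ℝ) + (S.card : ℝ) * Real.log (Fintype.card A : ℝ)) / γ ^ 2⌉₊ →
          m ≤ Fintype.card X →
          1 - Real.exp (-(c * (k : ℝ))) ≤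
            (((Finset.powersetCard m (Finset.univ : Finset X)).filter fun X' =>
                ∀ h : {x // x ∈ S} → A,
                  |(1 / (X'.card : ℝ)) * ∑ x ∈ X', gMax π (F h) x -
                      (1 / (Fintype.card X : ℝ)) * ∑ x : X, gMax π (F h) x| ≤ γ).card : ℝ) /
              ((Finset.powersetCard m (Finset.univ : Finset X)).card : ℝ) := by
  classical
  refine ⟨1/4, by norm_num, ?_⟩
  intro X Y A _ _ _ _ _ π S γ k hγ hk F _hF m hm hmn
  -- basic facts
  have hA1 : (1:ℝ) ≤ (Fintype.card A : ℝ) := by exact_mod_cast Fintype.card_pos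
  have hlogA : 0 ≤ Real.log (Fintype.card A : ℝ) := Real.log_nonneg hA1
  have hnum : (0:ℝ) < (k:ℝ) + (S.card : ℝ) * Real.log (Fintype.card A : ℝ) := by
    have : (1:ℝ) ≤ (k:ℝ) := by exact_mod_cast hk
    have : (0:ℝ) ≤ (S.card : ℝ) * Real.log (Fintype.card A : ℝ) := by positivity
    linarith
  have hm1 : 0 < m := by
    rw [hm]
    apply Nat.ceil_pos.2
    positivity
  have hmγ : (k:ℝ) + (S.card : ℝ) * Real.log (Fintype.card A : ℝ) ≤ (m:ℝ) * γ^2 := by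
    have h1 : ((k : ℝ) + (S.card : ℝ) * Real.log (Fintype.card A : ℝ)) / γ ^ 2 ≤ (m:ℝ) := by
      rw [hm]; exact Nat.le_ceil _
    rw [div_le_iff₀ (by positivity)] at h1
    linarith
  set n := Fintype.card X with hn
  have hnpos : 0 < n := lt_of_lt_of_le hm1 hmn
  have hnR : (0:ℝ) < (n:ℝ) := by exact_mod_cast hnpos
  set P : Finset (Finset X) := Finset.powersetCard m (Finset.univ : Finset X) with hP
  have hPcard : P.card = n.choose m := by
    rw [hP, Finset.card_powersetCard, Finset.card_univ]
  have hPpos : 0 < P.card := by rw [hPcard]; exact Nat.choose_pos hmn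
  have hPposR : (0:ℝ) < (P.card : ℝ) := by exact_mod_cast hPpos
  set good : Finset X → Prop := fun X' =>
    ∀ h : {x // x ∈ S} → A,
      |(1 / (X'.card : ℝ)) * ∑ x ∈ X', gMax π (F h) x -
          (1 / (n : ℝ)) * ∑ x : X, gMax π (F h) x| ≤ γ with hgood
  -- union bound over h of two chernoff bounds
  have hBad : ((P.filter fun X' => ¬ good X').card : ℝ) ≤ 2 * Real.exp (-(k:ℝ)) * (P.card : ℝ) := by
    -- the per-h bad sets
    have hsub : P.filter (fun X' => ¬ good X') ⊆
        (Finset.univ : Finset ({x // x ∈ S} → A)).biUnion (fun h =>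
          P.filter (fun X' => γ < |(1 / (X'.card : ℝ)) * ∑ x ∈ X', gMax π (F h) x -
            (1 / (n : ℝ)) * ∑ x : X, gMax π (F h) x|)) := by
      intro X' hX'
      rw [Finset.mem_filter] at hX'
      obtain ⟨hX'P, hX'b⟩ := hX'
      simp only [hgood] at hX'b
      push_neg at hX'b
      obtain ⟨h, hh⟩ := hX'b
      apply Finset.mem_biUnion.2
      exact ⟨h, Finset.mem_univ h, Finset.mem_filter.2 ⟨hX'P, hh⟩⟩
    have hcount : ∀ h : {x // x ∈ S} → A,
        ((P.filter (fun X' => γ < |(1 / (X'.card : ℝ)) * ∑ x ∈ X', gMax π (F h) x -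
            (1 / (n : ℝ)) * ∑ x : X, gMax π (F h) x|)).card : ℝ)
          ≤ 2 * (Real.exp (-(m:ℝ)*γ^2) * ((n.choose m : ℕ) : ℝ)) := by
      intro h
      set g : X → ℝ := gMax π (F h) with hgdef
      have hg0 : ∀ x, 0 ≤ g x := gMax_nonneg π (F h)
      have hg1 : ∀ x, g x ≤ 1 := gMax_le_one π (F h)
      set g' : X → ℝ := fun x => 1 - g x with hg'def
      have hg'0 : ∀ x, 0 ≤ g' x := fun x => by simp [hg'def]; linarith [hg1 x]
      have hg'1 : ∀ x, g' x ≤ 1 := fun x => by simp [hg'def]; linarith [hg0 x]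
      -- upper and lower tail sets
      have hup := chernoff_count g hg0 hg1 m hm1 hmn γ hγ
        (fun X' => (m:ℝ)*γ + (m:ℝ) * ((∑ x : X, g x)/(n:ℝ)) ≤ ∑ x ∈ X', g x)
        (fun _ hp => hp)
      have hlo := chernoff_count g' hg'0 hg'1 m hm1 hmn γ hγ
        (fun X' => (m:ℝ)*γ + (m:ℝ) * ((∑ x : X, g' x)/(n:ℝ)) ≤ ∑ x ∈ X', g' x)
        (fun _ hp => hp)
      -- the bad set splits
      have hsplit : P.filter (fun X' => γ < |(1 / (X'.card : ℝ)) * ∑ x ∈ X', g x -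
            (1 / (n : ℝ)) * ∑ x : X, g x|) ⊆
          (P.filter (fun X' => (m:ℝ)*γ + (m:ℝ) * ((∑ x : X, g x)/(n:ℝ)) ≤ ∑ x ∈ X', g x)) ∪
          (P.filter (fun X' => (m:ℝ)*γ + (m:ℝ) * ((∑ x : X, g' x)/(n:ℝ)) ≤ ∑ x ∈ X', g' x)) := by
        intro X' hX'
        rw [Finset.mem_filter] at hX'
        obtain ⟨hX'P, habs⟩ := hX'
        have hcard : X'.card = m := (Finset.mem_powersetCard.1 hX'P).2
        have hmR : (0:ℝ) < (m:ℝ) := by exact_mod_cast hm1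
        rw [Finset.mem_union]
        rcases lt_abs.1 habs with hcase | hcase
        · left
          apply Finset.mem_filter.2 ⟨hX'P, ?_⟩
          rw [hcard] at hcase
          rw [lt_sub_iff_add_lt] at hcase
          have := (mul_lt_mul_iff_right₀ hmR).2 hcase
          rw [mul_add] at this
          have h2 : (m:ℝ) * ((1/(m:ℝ)) * ∑ x ∈ X', g x) = ∑ x ∈ X', g x := by
            field_simp
          rw [h2] at this
          have h3 : (m:ℝ) * ((1/(n:ℝ)) * ∑ x : X, g x) = (m:ℝ) * ((∑ x : X, g x)/(n:ℝ)) := by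
            ring
          rw [h3] at this
          linarith
        · right
          apply Finset.mem_filter.2 ⟨hX'P, ?_⟩
          rw [neg_sub] at hcase
          rw [hcard] at hcase
          rw [lt_sub_iff_add_lt] at hcase
          have := (mul_lt_mul_iff_right₀ hmR).2 hcase
          rw [mul_add] at this
          have h2 : (m:ℝ) * ((1/(m:ℝ)) * ∑ x ∈ X', g x) = ∑ x ∈ X', g x := by
            field_simp
          rw [h2] at this
          -- translate to g'
          have hsum' : ∑ x ∈ X', g' x = (m:ℝ) - ∑ x ∈ X', g x := by
            rw [hg'def]
            rw [Finset.sum_sub_distrib, Finset.sum_const, hcard, nsmul_eq_mul, mul_one]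
          have hmean' : (∑ x : X, g' x) = (n:ℝ) - ∑ x : X, g x := by
            rw [hg'def]
            rw [Finset.sum_sub_distrib, Finset.sum_const, Finset.card_univ, ← hn, nsmul_eq_mul, mul_one]
          rw [hsum', hmean']
          have h4 : (m:ℝ) * (((n:ℝ) - ∑ x : X, g x)/(n:ℝ)) = (m:ℝ) - (m:ℝ) * ((1/(n:ℝ)) * ∑ x : X, g x) := by
            field_simp
          rw [h4]
          linarith
      calc ((P.filter (fun X' => γ < |(1 / (X'.card : ℝ)) * ∑ x ∈ X', g x -
            (1 / (n : ℝ)) * ∑ x : X, g x|)).card : ℝ)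
          ≤ (((P.filter (fun X' => (m:ℝ)*γ + (m:ℝ) * ((∑ x : X, g x)/(n:ℝ)) ≤ ∑ x ∈ X', g x)) ∪
            (P.filter (fun X' => (m:ℝ)*γ + (m:ℝ) * ((∑ x : X, g' x)/(n:ℝ)) ≤ ∑ x ∈ X', g' x))).card : ℝ) := by
            exact_mod_cast Finset.card_le_card hsplit
        _ ≤ ((P.filter (fun X' => (m:ℝ)*γ + (m:ℝ) * ((∑ x : X, g x)/(n:ℝ)) ≤ ∑ x ∈ X', g x)).card : ℝ) +
            ((P.filter (fun X' => (m:ℝ)*γ + (m:ℝ) * ((∑ x : X, g' x)/(n:ℝ)) ≤ ∑ x ∈ X', g' x)).card : ℝ) := by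
            exact_mod_cast Finset.card_union_le _ _
        _ ≤ 2 * (Real.exp (-(m:ℝ)*γ^2) * ((n.choose m : ℕ) : ℝ)) := by
            rw [hP] at *
            linarith [hup, hlo]
    -- sum over all h
    calc ((P.filter fun X' => ¬ good X').card : ℝ)
        ≤ (((Finset.univ : Finset ({x // x ∈ S} → A)).biUnion (fun h =>
            P.filter (fun X' => γ < |(1 / (X'.card : ℝ)) * ∑ x ∈ X', gMax π (F h) x -
              (1 / (n : ℝ)) * ∑ x : X, gMax π (F h) x|))).card : ℝ) := by
          exact_mod_cast Finset.card_le_card hsub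
      _ ≤ ∑ h : {x // x ∈ S} → A,
            ((P.filter (fun X' => γ < |(1 / (X'.card : ℝ)) * ∑ x ∈ X', gMax π (F h) x -
              (1 / (n : ℝ)) * ∑ x : X, gMax π (F h) x|)).card : ℝ) := by
          exact_mod_cast Finset.card_biUnion_le
      _ ≤ ∑ _h : {x // x ∈ S} → A, 2 * (Real.exp (-(m:ℝ)*γ^2) * ((n.choose m : ℕ) : ℝ)) :=
          Finset.sum_le_sum (fun h _ => hcount h)
      _ = (Fintype.card ({x // x ∈ S} → A) : ℝ) * (2 * (Real.exp (-(m:ℝ)*γ^2) * ((n.choose m : ℕ) : ℝ))) := by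
          rw [Finset.sum_const, Finset.card_univ, nsmul_eq_mul]
      _ ≤ 2 * Real.exp (-(k:ℝ)) * (P.card : ℝ) := by
          rw [Fintype.card_fun, Fintype.card_coe]
          have hcardfn : ((Fintype.card A ^ S.card : ℕ) : ℝ) = (Fintype.card A : ℝ) ^ S.card := by
            push_cast; ring
          rw [hcardfn, hPcard]
          have hexp1 : Real.exp (-(m:ℝ)*γ^2) ≤ Real.exp (-(k:ℝ)) * Real.exp (-((S.card : ℝ) * Real.log (Fintype.card A : ℝ))) := by
            rw [← Real.exp_add]
            apply Real.exp_le_exp.2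
            linarith
          have hApow : (Fintype.card A : ℝ) ^ S.card * Real.exp (-((S.card : ℝ) * Real.log (Fintype.card A : ℝ))) = 1 := by
            have hA0 : (0:ℝ) < (Fintype.card A : ℝ) := by linarith
            have he : Real.exp ((S.card : ℝ) * Real.log (Fintype.card A : ℝ))
                = (Fintype.card A : ℝ) ^ S.card := by
              rw [Real.exp_nat_mul, Real.exp_log hA0]
            rw [Real.exp_neg, he]
            apply mul_inv_cancel₀
            positivity
          have hC0 : (0:ℝ) ≤ ((n.choose m : ℕ) : ℝ) := by positivity
          have hApow0 : (0:ℝ) < (Fintype.card A : ℝ) ^ S.card := by positivity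
          calc (Fintype.card A : ℝ) ^ S.card * (2 * (Real.exp (-(m:ℝ)*γ^2) * ((n.choose m : ℕ) : ℝ)))
              ≤ (Fintype.card A : ℝ) ^ S.card * (2 * ((Real.exp (-(k:ℝ)) * Real.exp (-((S.card : ℝ) * Real.log (Fintype.card A : ℝ)))) * ((n.choose m : ℕ) : ℝ))) := by
                apply mul_le_mul_of_nonneg_left _ hApow0.le
                apply mul_le_mul_of_nonneg_left _ (by norm_num)
                exact mul_le_mul_of_nonneg_right hexp1 hC0
            _ = 2 * Real.exp (-(k:ℝ)) * ((n.choose m : ℕ) : ℝ) *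
                ((Fintype.card A : ℝ) ^ S.card * Real.exp (-((S.card : ℝ) * Real.log (Fintype.card A : ℝ)))) := by
                ring
            _ = 2 * Real.exp (-(k:ℝ)) * ((n.choose m : ℕ) : ℝ) := by
                rw [hApow, mul_one]
  -- finish
  have hcomp : ((P.filter good).card : ℝ) = (P.card : ℝ) - ((P.filter fun X' => ¬ good X').card : ℝ) := by
    have := Finset.card_filter_add_card_filter_not (s := P) (p := good)
    have h2 : ((P.filter good).card + (P.filter fun X' => ¬ good X').card : ℕ) = P.card := this
    have h3 : (((P.filter good).card : ℝ) + ((P.filter fun X' => ¬ good X').card : ℝ)) = (P.card : ℝ) := by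
      exact_mod_cast h2
    linarith
  have h2ek : 2 * Real.exp (-(k:ℝ)) ≤ Real.exp (-(1/4 * (k:ℝ))) := by
    have hlog2 : Real.log 2 < 0.6931471808 := Real.log_two_lt_d9
    have hkR : (1:ℝ) ≤ (k:ℝ) := by exact_mod_cast hk
    rw [show (2:ℝ) * Real.exp (-(k:ℝ)) = Real.exp (Real.log 2 + -(k:ℝ)) by
      rw [Real.exp_add, Real.exp_log (by norm_num : (0:ℝ) < 2)]]
    apply Real.exp_le_exp.2
    nlinarith
  have hfrac : ((P.filter good).card : ℝ) / (P.card : ℝ)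
      = 1 - ((P.filter fun X' => ¬ good X').card : ℝ) / (P.card : ℝ) := by
    rw [hcomp]
    field_simp
  have hgoal : 1 - Real.exp (-(1/4 * (k:ℝ))) ≤ ((P.filter good).card : ℝ) / (P.card : ℝ) := by
    rw [hfrac]
    have hb : ((P.filter fun X' => ¬ good X').card : ℝ) / (P.card : ℝ) ≤ 2 * Real.exp (-(k:ℝ)) := by
      rw [div_le_iff₀ hPposR]
      calc ((P.filter fun X' => ¬ good X').card : ℝ) ≤ 2 * Real.exp (-(k:ℝ)) * (P.card : ℝ) := hBad
        _ = 2 * Real.exp (-(k:ℝ)) * (P.card : ℝ) := rfl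
    have := hb.trans h2ek
    linarith
  have hconv := hgoal
  simp only [hgood] at hconv
  convert hconv using 4


end FreeGames
end

section
/- Let F be a finite field, let m ≥ 1, let A ⊆ F^m with |A| = ρ·|F|^m, and let ε > 0. If x and y are chosen independently and uniformly at random from F^m, then the probability that the fraction of t ∈ F with x + t·y ∈ A differs from ρ by more than ε is at most ρ/(ε²·|F|); that is, Pr[ | |{t ∈ F : x + t·y ∈ A}|/|F| − ρ | > ε ] ≤ ρ/(ε²·|F|). -/
open Finset

open scoped Classical in
/-- for `A ⊆ F^m` of density `ρ` and uniformly random independent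
`x, y ∈ F^m`, the probability that the fraction of `t ∈ F` with `x + t·y ∈ A` deviates
from `ρ` by more than `ε` is at most `ρ/(ε²·|F|)`. -/
theorem line_sampling {F : Type*} [Field F] [Fintype F] [DecidableEq F]
    (m : ℕ) (hm : 1 ≤ m)
    (ρ ε : ℝ) (hε : 0 < ε)
    (A : Finset (Fin m → F)) (hA : (A.card : ℝ) = ρ * (Fintype.card F : ℝ) ^ m) :
    (((Finset.univ : Finset ((Fin m → F) × (Fin m → F))).filter fun p =>
        ε < |(((Finset.univ : Finset F).filter fun t => p.1 + t • p.2 ∈ A).card : ℝ) /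
              (Fintype.card F : ℝ) - ρ|).card : ℝ) /
      (Fintype.card ((Fin m → F) × (Fin m → F)) : ℝ) ≤
    ρ / (ε ^ 2 * (Fintype.card F : ℝ)) := by
  classical
  set q : ℕ := Fintype.card F with hqdef
  have hq0 : 0 < q := Fintype.card_pos
  have hqR : (0:ℝ) < q := by exact_mod_cast hq0
  have hNspace : Fintype.card (Fin m → F) = q ^ m := by
    simp [Fintype.card_fun, hqdef]
  set N : ℝ := (q:ℝ) ^ m with hNdef
  have hN0 : 0 < N := by positivity
  set a : ℝ := (A.card : ℝ) with hadef
  -- Count lemma 1 : for fixed t, #{(x,y) : x + t y ∈ A} = |A| * q^m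
  have count1 : ∀ t : F,
      (((univ : Finset ((Fin m → F) × (Fin m → F))).filter fun p => p.1 + t • p.2 ∈ A).card)
        = A.card * q ^ m := by
    intro t
    have hprod : (A ×ˢ (univ : Finset (Fin m → F))).card = A.card * q ^ m := by
      simp [Finset.card_product, hNspace, Finset.card_univ]
    rw [← hprod]
    apply Finset.card_nbij' (fun p => (p.1 + t • p.2, p.2)) (fun p => (p.1 - t • p.2, p.2))
    · intro p hp
      simp only [Finset.mem_coe, Finset.mem_filter, Finset.mem_univ, true_and] at hp
      simp [Finset.mem_product, hp]
    · intro p hp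
      simp only [Finset.mem_coe, Finset.mem_product, Finset.mem_univ, and_true] at hp
      simp [sub_add_cancel, hp]
    · intro p hp; simp
    · intro p hp; simp
  -- Count lemma 2 : for t1 ≠ t2, #{(x,y) : x + t1 y ∈ A ∧ x + t2 y ∈ A} = |A|^2
  have count2 : ∀ t1 t2 : F, t1 ≠ t2 →
      (((univ : Finset ((Fin m → F) × (Fin m → F))).filter
          fun p => p.1 + t1 • p.2 ∈ A ∧ p.1 + t2 • p.2 ∈ A).card)
        = A.card * A.card := by
    intro t1 t2 ht
    have hs : t2 - t1 ≠ 0 := sub_ne_zero.mpr (Ne.symm ht)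
    have hs' : t2 + -t1 ≠ 0 := by rwa [← sub_eq_add_neg]
    have hprod : (A ×ˢ A).card = A.card * A.card := Finset.card_product A A
    rw [← hprod]
    apply Finset.card_nbij' (fun p => (p.1 + t1 • p.2, p.1 + t2 • p.2))
      (fun u => (u.1 - t1 • ((t2 - t1)⁻¹ • (u.2 - u.1)), (t2 - t1)⁻¹ • (u.2 - u.1)))
    · intro p hp
      simp only [Finset.mem_coe, Finset.mem_filter, Finset.mem_univ, true_and] at hp
      simp [Finset.mem_product, hp.1, hp.2]
    · intro u hu
      simp only [Finset.mem_coe, Finset.mem_product] at hu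
      simp only [Finset.mem_coe, Finset.mem_filter, Finset.mem_univ, true_and]
      have e1 : u.1 - t1 • ((t2 - t1)⁻¹ • (u.2 - u.1)) + t1 • ((t2 - t1)⁻¹ • (u.2 - u.1)) = u.1 := by
        abel
      have e2 : u.1 - t1 • ((t2 - t1)⁻¹ • (u.2 - u.1)) + t2 • ((t2 - t1)⁻¹ • (u.2 - u.1)) = u.2 := by
        funext i
        simp only [Pi.add_apply, Pi.sub_apply, Pi.smul_apply, smul_eq_mul]
        field_simp
        ring
      rw [e1, e2]
      exact ⟨hu.1, hu.2⟩
    · intro p hp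
      ext i <;> simp only [Pi.add_apply, Pi.sub_apply, Pi.smul_apply, smul_eq_mul] <;>
        field_simp <;> ring
    · intro u hu
      ext i <;> simp only [Pi.add_apply, Pi.sub_apply, Pi.smul_apply, smul_eq_mul] <;>
        field_simp <;> ring
  -- abbreviation for the line count
  set Z : ((Fin m → F) × (Fin m → F)) → ℕ :=
    fun p => (((Finset.univ : Finset F).filter fun t => p.1 + t • p.2 ∈ A).card) with hZdef
  have hZsum : ∀ p, (Z p : ℝ) = ∑ t : F, (if p.1 + t • p.2 ∈ A then (1:ℝ) else 0) := by
    intro p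
    simp [hZdef, Finset.sum_boole]
  -- first moment
  have sum1 : ∑ p : ((Fin m → F) × (Fin m → F)), (Z p : ℝ) = (q : ℝ) * (a * N) := by
    simp_rw [hZsum]
    rw [Finset.sum_comm]
    have h1 : ∀ t : F, ∑ p : ((Fin m → F) × (Fin m → F)),
        (if p.1 + t • p.2 ∈ A then (1:ℝ) else 0) = a * N := by
      intro t
      rw [Finset.sum_boole]
      rw [count1 t]
      push_cast [hadef, hNdef]
      ring
    simp_rw [h1]
    rw [Finset.sum_const, Finset.card_univ, nsmul_eq_mul]
  -- second moment
  have sum2 : ∑ p : ((Fin m → F) × (Fin m → F)), (Z p : ℝ) ^ 2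
      = (q : ℝ) * (a * N) + (q : ℝ) * ((q : ℝ) - 1) * (a * a) := by
    have hZ2 : ∀ p : ((Fin m → F) × (Fin m → F)), (Z p : ℝ) ^ 2
        = ∑ t1 : F, ∑ t2 : F,
            (if p.1 + t1 • p.2 ∈ A ∧ p.1 + t2 • p.2 ∈ A then (1:ℝ) else 0) := by
      intro p
      rw [sq, hZsum, Finset.sum_mul_sum]
      apply Finset.sum_congr rfl; intro t1 _
      apply Finset.sum_congr rfl; intro t2 _
      by_cases h1 : p.1 + t1 • p.2 ∈ A <;> by_cases h2 : p.1 + t2 • p.2 ∈ A <;> simp [h1, h2]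
    simp_rw [hZ2]
    rw [Finset.sum_comm]
    have hswap : ∀ t1 : F, ∑ p : ((Fin m → F) × (Fin m → F)), ∑ t2 : F,
        (if p.1 + t1 • p.2 ∈ A ∧ p.1 + t2 • p.2 ∈ A then (1:ℝ) else 0)
        = ∑ t2 : F, ∑ p : ((Fin m → F) × (Fin m → F)),
        (if p.1 + t1 • p.2 ∈ A ∧ p.1 + t2 • p.2 ∈ A then (1:ℝ) else 0) :=
      fun _ => Finset.sum_comm
    simp_rw [hswap]
    have hinner : ∀ t1 t2 : F, ∑ p : ((Fin m → F) × (Fin m → F)),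
        (if p.1 + t1 • p.2 ∈ A ∧ p.1 + t2 • p.2 ∈ A then (1:ℝ) else 0)
        = if t1 = t2 then a * N else a * a := by
      intro t1 t2
      rw [Finset.sum_boole]
      by_cases h : t1 = t2
      · subst h
        rw [if_pos rfl]
        have : ((univ : Finset ((Fin m → F) × (Fin m → F))).filter
            fun p => p.1 + t1 • p.2 ∈ A ∧ p.1 + t1 • p.2 ∈ A)
            = ((univ : Finset ((Fin m → F) × (Fin m → F))).filter
            fun p => p.1 + t1 • p.2 ∈ A) := by
          apply Finset.filter_congr; intro p _; simp [and_self]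
        rw [this, count1 t1]
        push_cast [hadef, hNdef]; ring
      · rw [if_neg h, count2 t1 t2 h]
        push_cast [hadef]; ring
    simp_rw [hinner]
    have hdiag : ∀ t1 : F, ∑ t2 : F, (if t1 = t2 then a * N else a * a)
        = a * N + ((q:ℝ) - 1) * (a * a) := by
      intro t1
      have hsplit : ∀ t2 : F, (if t1 = t2 then a * N else a * a)
          = a * a + (if t1 = t2 then a * N - a * a else 0) := by
        intro t2; split <;> ring
      simp_rw [hsplit]
      rw [Finset.sum_add_distrib, Finset.sum_const, Finset.sum_ite_eq, Finset.card_univ]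
      simp only [Finset.mem_univ, if_true, nsmul_eq_mul, hqdef]
      ring
    simp_rw [hdiag]
    rw [Finset.sum_const, Finset.card_univ, nsmul_eq_mul]
    ring
  -- variance computation
  have cardΩ : (Fintype.card ((Fin m → F) × (Fin m → F)) : ℝ) = N * N := by
    rw [Fintype.card_prod, hNspace]
    push_cast [hNdef]; ring
  have hvar : ∑ p : ((Fin m → F) × (Fin m → F)), ((Z p : ℝ) / (q:ℝ) - ρ) ^ 2
      = (ρ - ρ ^ 2) * (N * N) / (q:ℝ) := by
    have hexp : ∀ p : ((Fin m → F) × (Fin m → F)), ((Z p : ℝ) / (q:ℝ) - ρ) ^ 2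
        = (Z p : ℝ) ^ 2 * (1 / (q:ℝ)^2) - (Z p : ℝ) * (2 * ρ / (q:ℝ)) + ρ ^ 2 := by
      intro p; field_simp; ring
    simp_rw [hexp]
    rw [Finset.sum_add_distrib, Finset.sum_sub_distrib, ← Finset.sum_mul, ← Finset.sum_mul,
      Finset.sum_const, Finset.card_univ, nsmul_eq_mul, cardΩ, sum1, sum2]
    have ha : a = ρ * N := hA
    rw [ha]
    field_simp
    ring
  -- Chebyshev
  set B := ((Finset.univ : Finset ((Fin m → F) × (Fin m → F))).filter fun p =>
        ε < |(((Finset.univ : Finset F).filter fun t => p.1 + t • p.2 ∈ A).card : ℝ) /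
              (Fintype.card F : ℝ) - ρ|) with hBdef
  have cheb : ε ^ 2 * (B.card : ℝ) ≤ (ρ - ρ ^ 2) * (N * N) / (q:ℝ) := by
    rw [← hvar]
    calc ε ^ 2 * (B.card : ℝ) = ∑ _p ∈ B, ε ^ 2 := by
          rw [Finset.sum_const, nsmul_eq_mul]; ring
      _ ≤ ∑ p ∈ B, ((Z p : ℝ) / (q:ℝ) - ρ) ^ 2 := by
          apply Finset.sum_le_sum
          intro p hp
          have hp' := (Finset.mem_filter.mp hp).2
          have h1 : ε ≤ |(Z p : ℝ) / (q:ℝ) - ρ| := le_of_lt hp'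
          calc ε ^ 2 ≤ |(Z p : ℝ) / (q:ℝ) - ρ| ^ 2 := by
                apply pow_le_pow_left₀ (le_of_lt hε) h1
            _ = ((Z p : ℝ) / (q:ℝ) - ρ) ^ 2 := sq_abs _
      _ ≤ ∑ p : ((Fin m → F) × (Fin m → F)), ((Z p : ℝ) / (q:ℝ) - ρ) ^ 2 := by
          apply Finset.sum_le_sum_of_subset_of_nonneg (Finset.subset_univ B)
          intro p _ _; exact sq_nonneg _
  -- conclude
  rw [cardΩ, div_le_div_iff₀ (by positivity) (by positivity)]
  have hch : ε ^ 2 * (B.card : ℝ) * (q : ℝ) ≤ (ρ - ρ ^ 2) * (N * N) := by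
    have h := mul_le_mul_of_nonneg_right cheb (le_of_lt hqR)
    rwa [div_mul_cancel₀ _ (ne_of_gt hqR)] at h
  nlinarith [hch, mul_nonneg (sq_nonneg ρ) (mul_nonneg hN0.le hN0.le)]
end

section
/- Let F be a finite field, let m ≥ 1, let A ⊆ F^m with |A| = ρ·|F|^m, and let ε > 0. If x, y, z are chosen independently and uniformly at random from F^m, then the probability that the fraction of pairs (t₁,t₂) ∈ F² with x + t₁·y + t₂·(z−x) ∈ A differs from ρ by more than ε is at most ρ/(ε²·|F|); that is, Pr[ | |{(t₁,t₂) ∈ F×F : x + t₁·y + t₂·(z−x) ∈ A}|/|F|² − ρ | > ε ] ≤ ρ/(ε²·|F|). -/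
open Finset
section aux
variable {V W : Type*} [AddCommGroup V] [AddCommGroup W] [Fintype V] [Fintype W] [DecidableEq W]
set_option linter.unusedSectionVars false

lemma fiber_card (f : V →+ W) (hf : Function.Surjective f) (w : W) :
    (univ.filter fun v => f v = w).card = (univ.filter fun v => f v = (0:W)).card := by
  obtain ⟨v₀, hv₀⟩ := hf w
  apply Finset.card_bij (fun v _ => v - v₀)
  · intro v hv
    simp only [mem_filter, mem_univ, true_and] at hv ⊢
    simp [map_sub, hv, hv₀]
  · intro a ha b hb h
    exact sub_left_injective h
  · intro u hu
    refine ⟨u + v₀, ?_, by abel⟩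
    simp only [mem_filter, mem_univ, true_and] at hu ⊢
    simp [map_add, hu, hv₀]

lemma card_total (f : V →+ W) (hf : Function.Surjective f) :
    Fintype.card V = Fintype.card W * (univ.filter fun v => f v = (0:W)).card := by
  have h := Finset.card_eq_sum_card_fiberwise (f := fun v => f v) (s := univ) (t := univ)
    (fun v _ => mem_univ _)
  rw [card_univ] at h
  rw [h, Finset.sum_congr rfl (fun w _ => fiber_card f hf w), Finset.sum_const, card_univ,
    smul_eq_mul]

lemma count_mem (f : V →+ W) (hf : Function.Surjective f) (S : Finset W) :
    (univ.filter fun v => f v ∈ S).card * Fintype.card W = S.card * Fintype.card V := by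
  have h := Finset.card_eq_sum_card_fiberwise (f := fun v => f v)
    (s := univ.filter fun v => f v ∈ S) (t := S)
    (fun v hv => (mem_filter.mp hv).2)
  have h2 : ∀ w ∈ S, ((univ.filter fun v => f v ∈ S).filter fun v => f v = w).card
      = (univ.filter fun v => f v = (0:W)).card := by
    intro w hw
    rw [Finset.filter_filter]
    rw [show (univ.filter fun v => f v ∈ S ∧ f v = w) = univ.filter fun v => f v = w from
      Finset.filter_congr fun v _ => by constructor <;> intro h <;> simp_all]
    exact fiber_card f hf w
  rw [h, Finset.sum_congr rfl h2, Finset.sum_const, smul_eq_mul]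
  rw [mul_assoc, mul_comm ((univ.filter fun v => f v = (0:W)).card) (Fintype.card W),
    ← card_total f hf]

lemma count_memR (f : V →+ W) (hf : Function.Surjective f) (S : Finset W) :
    ((univ.filter fun v => f v ∈ S).card : ℝ)
      = S.card * Fintype.card V / Fintype.card W := by
  have hW : (0:ℝ) < Fintype.card W := by exact_mod_cast Fintype.card_pos
  rw [eq_div_iff hW.ne']
  exact_mod_cast count_mem f hf S
end aux

def lmap {F : Type*} [Field F] {m : ℕ} (t : F × F) :
    ((Fin m → F) × (Fin m → F) × (Fin m → F)) →+ (Fin m → F) :=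
  AddMonoidHom.mk' (fun p => p.1 + t.1 • p.2.1 + t.2 • (p.2.2 - p.1)) (by
    intro p q
    show p.1 + q.1 + t.1 • (p.2.1 + q.2.1) + t.2 • (p.2.2 + q.2.2 - (p.1 + q.1)) = _
    module)

lemma lmap_apply {F : Type*} [Field F] {m : ℕ} (t : F × F)
    (p : (Fin m → F) × (Fin m → F) × (Fin m → F)) :
    lmap t p = p.1 + t.1 • p.2.1 + t.2 • (p.2.2 - p.1) := rfl

lemma lmap_surj {F : Type*} [Field F] {m : ℕ} (t : F × F) :
    Function.Surjective (lmap (m := m) t) := by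
  intro a
  exact ⟨(a, 0, a), by simp [lmap_apply]⟩

lemma lmap_pair_surj {F : Type*} [Field F] {m : ℕ} {t t' : F × F} (h : t ≠ t') :
    Function.Surjective ((lmap (m := m) t).prod (lmap t')) := by
  rintro ⟨a, b⟩
  by_cases h1 : t.1 ≠ t'.1
  · set y := (t.1 - t'.1)⁻¹ • (a - b) with hy
    refine ⟨(a - t.1 • y, y, a - t.1 • y), ?_⟩
    have hs : t.1 - t'.1 ≠ 0 := sub_ne_zero.mpr h1
    simp only [AddMonoidHom.prod_apply, lmap_apply, Prod.mk.injEq]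
    constructor
    · match_scalars <;> field_simp <;> ring
    · match_scalars <;> field_simp <;> ring
  · push_neg at h1
    have h2 : t.2 ≠ t'.2 := by
      intro h2; exact h (Prod.ext h1 h2)
    have hs : t.2 - t'.2 ≠ 0 := sub_ne_zero.mpr h2
    set u := (t.2 - t'.2)⁻¹ • (a - b) with hu
    refine ⟨(a - t.2 • u, 0, a - t.2 • u + u), ?_⟩
    simp only [AddMonoidHom.prod_apply, lmap_apply, Prod.mk.injEq]
    constructor
    · match_scalars <;> field_simp <;> ring
    · match_scalars <;> field_simp <;> ring


lemma cheb_main {Om : Type*} [Fintype Om] (c : Om → ℕ) (q N ρ ε : ℝ)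
    (hq1 : 1 ≤ q) (hN : 0 < N) (hε : 0 < ε) (hρ : 0 ≤ ρ)
    (hcard : (Fintype.card Om : ℝ) = N ^ 3)
    (hS1 : (∑ p : Om, (c p : ℝ)) = q ^ 2 * (ρ * N) * N ^ 2)
    (hS2 : (∑ p : Om, (c p : ℝ) ^ 2)
      = q ^ 2 * (ρ * N) * N ^ 2 + q ^ 2 * (q ^ 2 - 1) * (ρ * N) ^ 2 * N) :
    (((Finset.univ : Finset Om).filter fun p =>
        ε < |(c p : ℝ) / q ^ 2 - ρ|).card : ℝ) / (Fintype.card Om : ℝ)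
      ≤ ρ / (ε ^ 2 * q) := by
  have hq0 : (0:ℝ) < q := lt_of_lt_of_le one_pos hq1
  set Bad := ((Finset.univ : Finset Om).filter fun p => ε < |(c p : ℝ) / q ^ 2 - ρ|) with hBad
  have cheb : (Bad.card : ℝ) * ε ^ 2 ≤ ∑ p : Om, ((c p : ℝ) / q ^ 2 - ρ) ^ 2 := by
    calc (Bad.card : ℝ) * ε ^ 2 = ∑ _p ∈ Bad, ε ^ 2 := by
          rw [Finset.sum_const, nsmul_eq_mul]
      _ ≤ ∑ p ∈ Bad, ((c p : ℝ) / q ^ 2 - ρ) ^ 2 := by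
          refine Finset.sum_le_sum fun p hp => ?_
          have h1 := (mem_filter.mp hp).2
          nlinarith [sq_abs ((c p : ℝ) / q ^ 2 - ρ), abs_nonneg ((c p : ℝ) / q ^ 2 - ρ)]
      _ ≤ _ := Finset.sum_le_sum_of_subset_of_nonneg (filter_subset _ _)
          (fun _ _ _ => sq_nonneg _)
  have total : (∑ p : Om, ((c p : ℝ) / q ^ 2 - ρ) ^ 2) = (ρ - ρ ^ 2) * N ^ 3 / q ^ 2 := by
    have expand3 : ∀ p : Om, ((c p : ℝ) / q ^ 2 - ρ) ^ 2
        = (c p : ℝ) ^ 2 / q ^ 4 - (2 * ρ / q ^ 2) * (c p : ℝ) + ρ ^ 2 := by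
      intro p
      field_simp
      ring
    rw [Finset.sum_congr rfl fun p _ => expand3 p]
    rw [Finset.sum_add_distrib, Finset.sum_sub_distrib, ← Finset.sum_div, ← Finset.mul_sum,
      hS1, hS2, Finset.sum_const, card_univ, nsmul_eq_mul, hcard]
    field_simp
    ring
  rw [total] at cheb
  have cheb2 : (Bad.card : ℝ) * ε ^ 2 * q ^ 2 ≤ (ρ - ρ ^ 2) * N ^ 3 := by
    have h2 := mul_le_mul_of_nonneg_right cheb (le_of_lt (by positivity : (0:ℝ) < q ^ 2))
    calc (Bad.card : ℝ) * ε ^ 2 * q ^ 2 ≤ (ρ - ρ ^ 2) * N ^ 3 / q ^ 2 * q ^ 2 := h2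
      _ = (ρ - ρ ^ 2) * N ^ 3 := by field_simp
  rw [hcard, div_le_div_iff₀ (by positivity) (by positivity)]
  nlinarith [cheb2, mul_nonneg (mul_nonneg (Nat.cast_nonneg Bad.card) (sq_nonneg ε)) hq0.le,
    mul_nonneg (sq_nonneg ρ) (le_of_lt (by positivity : (0:ℝ) < N ^ 3)), hq1,
    mul_nonneg (mul_nonneg (mul_nonneg (Nat.cast_nonneg Bad.card) (sq_nonneg ε)) hq0.le)
      (sub_nonneg.mpr hq1)]

set_option maxHeartbeats 1600000 in
open scoped Classical in
/-- for `A ⊆ F^m` of density `ρ` and uniformly random independent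
`x, y, z ∈ F^m`, the probability that the fraction of pairs `(t₁,t₂) ∈ F²` with
`x + t₁·y + t₂·(z-x) ∈ A` deviates from `ρ` by more than `ε` is at most `ρ/(ε²·|F|)`. -/
theorem plane_sampling {F : Type*} [Field F] [Fintype F] [DecidableEq F]
    (m : ℕ) (hm : 1 ≤ m)
    (ρ ε : ℝ) (hε : 0 < ε)
    (A : Finset (Fin m → F)) (hA : (A.card : ℝ) = ρ * (Fintype.card F : ℝ) ^ m) :
    (((Finset.univ : Finset ((Fin m → F) × (Fin m → F) × (Fin m → F))).filter fun p =>
        ε < |(((Finset.univ : Finset (F × F)).filter fun t =>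
                p.1 + t.1 • p.2.1 + t.2 • (p.2.2 - p.1) ∈ A).card : ℝ) /
              (Fintype.card F : ℝ) ^ 2 - ρ|).card : ℝ) /
      (Fintype.card ((Fin m → F) × (Fin m → F) × (Fin m → F)) : ℝ) ≤
    ρ / (ε ^ 2 * (Fintype.card F : ℝ)) := by
  have hq1 : (1:ℝ) ≤ (Fintype.card F : ℝ) := by
    have h1 : 1 ≤ Fintype.card F := Fintype.card_pos
    exact_mod_cast h1
  have hq0 : (0:ℝ) < (Fintype.card F : ℝ) := lt_of_lt_of_le one_pos hq1
  have hN : (0:ℝ) < (Fintype.card F : ℝ) ^ m := pow_pos hq0 m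
  have hΩ : (Fintype.card ((Fin m → F) × (Fin m → F) × (Fin m → F)) : ℝ)
      = ((Fintype.card F : ℝ) ^ m) ^ 3 := by
    rw [Fintype.card_prod, Fintype.card_prod, Fintype.card_fun, Fintype.card_fin]
    push_cast
    ring
  have hF2 : (Fintype.card (F × F) : ℝ) = (Fintype.card F : ℝ) ^ 2 := by
    rw [Fintype.card_prod]; push_cast; ring
  have hFm : (Fintype.card (Fin m → F) : ℝ) = (Fintype.card F : ℝ) ^ m := by
    rw [Fintype.card_fun, Fintype.card_fin]; push_cast; ring
  have hFm2 : (Fintype.card ((Fin m → F) × (Fin m → F)) : ℝ)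
      = ((Fintype.card F : ℝ) ^ m) ^ 2 := by
    rw [Fintype.card_prod, Fintype.card_fun, Fintype.card_fin]
    push_cast
    ring
  have hρ : 0 ≤ ρ := by
    have h0 : (0:ℝ) ≤ (A.card : ℝ) := Nat.cast_nonneg _
    nlinarith [hA]
  have key1 : ∀ t : F × F,
      ((univ.filter fun p : (Fin m → F) × (Fin m → F) × (Fin m → F) =>
        lmap t p ∈ A).card : ℝ) = A.card * ((Fintype.card F : ℝ) ^ m) ^ 2 := by
    intro t
    rw [count_memR (lmap t) (lmap_surj t) A, hΩ, hFm]
    field_simp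
  have key2 : ∀ t t' : F × F, t ≠ t' →
      ((univ.filter fun p : (Fin m → F) × (Fin m → F) × (Fin m → F) =>
        lmap t p ∈ A ∧ lmap t' p ∈ A).card : ℝ)
        = (A.card : ℝ) ^ 2 * (Fintype.card F : ℝ) ^ m := by
    intro t t' h
    have h1 := count_memR ((lmap (m := m) t).prod (lmap t')) (lmap_pair_surj h) (A ×ˢ A)
    simp only [AddMonoidHom.prod_apply, Finset.mem_product] at h1
    rw [h1, hΩ, hFm2, Finset.card_product]
    push_cast
    field_simp
  have boole1 : ∀ t : F × F,
      (∑ p : (Fin m → F) × (Fin m → F) × (Fin m → F),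
        if lmap t p ∈ A then (1:ℝ) else 0) = A.card * ((Fintype.card F : ℝ) ^ m) ^ 2 := by
    intro t
    rw [Finset.sum_boole]
    exact key1 t
  have hc : ∀ p : (Fin m → F) × (Fin m → F) × (Fin m → F),
      ((((Finset.univ : Finset (F × F)).filter fun t =>
          p.1 + t.1 • p.2.1 + t.2 • (p.2.2 - p.1) ∈ A).card : ℕ) : ℝ)
      = ∑ t : F × F, (if lmap t p ∈ A then (1:ℝ) else 0) := by
    intro p
    rw [Finset.card_filter]
    push_cast
    rfl
  have hS1 : (∑ p : (Fin m → F) × (Fin m → F) × (Fin m → F),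
        ((((Finset.univ : Finset (F × F)).filter fun t =>
          p.1 + t.1 • p.2.1 + t.2 • (p.2.2 - p.1) ∈ A).card : ℕ) : ℝ))
      = (Fintype.card F : ℝ) ^ 2 * (ρ * (Fintype.card F : ℝ) ^ m)
          * ((Fintype.card F : ℝ) ^ m) ^ 2 := by
    rw [Finset.sum_congr rfl fun p _ => hc p, Finset.sum_comm,
      Finset.sum_congr rfl fun t _ => boole1 t, Finset.sum_const, card_univ, nsmul_eq_mul,
      hF2, hA]
    ring
  have inner : ∀ t t' : F × F,
      (∑ p : (Fin m → F) × (Fin m → F) × (Fin m → F),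
        if lmap t p ∈ A ∧ lmap t' p ∈ A then (1:ℝ) else 0)
      = if t = t' then (A.card : ℝ) * ((Fintype.card F : ℝ) ^ m) ^ 2
        else (A.card : ℝ) ^ 2 * (Fintype.card F : ℝ) ^ m := by
    intro t t'
    rw [Finset.sum_boole]
    by_cases h : t = t'
    · subst h
      rw [if_pos rfl]
      simpa only [and_self] using key1 t
    · rw [if_neg h]
      exact key2 t t' h
  have hS2 : (∑ p : (Fin m → F) × (Fin m → F) × (Fin m → F),
        ((((Finset.univ : Finset (F × F)).filter fun t =>
          p.1 + t.1 • p.2.1 + t.2 • (p.2.2 - p.1) ∈ A).card : ℕ) : ℝ) ^ 2)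
      = (Fintype.card F : ℝ) ^ 2 * (ρ * (Fintype.card F : ℝ) ^ m)
          * ((Fintype.card F : ℝ) ^ m) ^ 2
        + (Fintype.card F : ℝ) ^ 2 * ((Fintype.card F : ℝ) ^ 2 - 1)
          * (ρ * (Fintype.card F : ℝ) ^ m) ^ 2 * (Fintype.card F : ℝ) ^ m := by
    have expand2 : ∀ p : (Fin m → F) × (Fin m → F) × (Fin m → F),
        ((((Finset.univ : Finset (F × F)).filter fun t =>
          p.1 + t.1 • p.2.1 + t.2 • (p.2.2 - p.1) ∈ A).card : ℕ) : ℝ) ^ 2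
        = ∑ t : F × F, ∑ t' : F × F,
          (if lmap t p ∈ A ∧ lmap t' p ∈ A then (1:ℝ) else 0) := by
      intro p
      rw [sq, hc, Finset.sum_mul_sum]
      refine Finset.sum_congr rfl fun t _ => Finset.sum_congr rfl fun t' _ => ?_
      by_cases h1 : lmap t p ∈ A <;> by_cases h2 : lmap t' p ∈ A <;>
        simp only [h1, h2, and_true, and_false, true_and, false_and, if_true, if_false,
          mul_one, mul_zero, one_mul, zero_mul, ite_false, ite_true]
    rw [Finset.sum_congr rfl fun p _ => expand2 p, Finset.sum_comm]
    have swap2 : ∀ t : F × F,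
        (∑ p : (Fin m → F) × (Fin m → F) × (Fin m → F), ∑ t' : F × F,
          (if lmap t p ∈ A ∧ lmap t' p ∈ A then (1:ℝ) else 0))
        = ∑ t' : F × F, (if t = t' then (A.card : ℝ) * ((Fintype.card F : ℝ) ^ m) ^ 2
            else (A.card : ℝ) ^ 2 * (Fintype.card F : ℝ) ^ m) := by
      intro t
      rw [Finset.sum_comm]
      exact Finset.sum_congr rfl fun t' _ => inner t t'
    rw [Finset.sum_congr rfl fun t _ => swap2 t]
    have hrow : ∀ t : F × F,
        (∑ t' : F × F, (if t = t' then (A.card : ℝ) * ((Fintype.card F : ℝ) ^ m) ^ 2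
            else (A.card : ℝ) ^ 2 * (Fintype.card F : ℝ) ^ m))
        = (Fintype.card F : ℝ) ^ 2 * ((A.card : ℝ) ^ 2 * (Fintype.card F : ℝ) ^ m)
          + ((A.card : ℝ) * ((Fintype.card F : ℝ) ^ m) ^ 2
             - (A.card : ℝ) ^ 2 * (Fintype.card F : ℝ) ^ m) := by
      intro t
      have step : ∀ t' : F × F,
          (if t = t' then (A.card : ℝ) * ((Fintype.card F : ℝ) ^ m) ^ 2
            else (A.card : ℝ) ^ 2 * (Fintype.card F : ℝ) ^ m)
          = (A.card : ℝ) ^ 2 * (Fintype.card F : ℝ) ^ m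
            + (if t = t' then (A.card : ℝ) * ((Fintype.card F : ℝ) ^ m) ^ 2
                - (A.card : ℝ) ^ 2 * (Fintype.card F : ℝ) ^ m else 0) := by
        intro t'
        split_ifs <;> ring
      rw [Finset.sum_congr rfl fun t' _ => step t', Finset.sum_add_distrib, Finset.sum_const,
        Finset.sum_ite_eq, if_pos (mem_univ t), card_univ, nsmul_eq_mul, hF2]
    rw [Finset.sum_congr rfl fun t _ => hrow t, Finset.sum_const, card_univ, nsmul_eq_mul,
      hF2, hA]
    ring
  have main := cheb_main
    (fun p : (Fin m → F) × (Fin m → F) × (Fin m → F) =>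
      (((Finset.univ : Finset (F × F)).filter fun t =>
        p.1 + t.1 • p.2.1 + t.2 • (p.2.2 - p.1) ∈ A).card : ℕ))
    (Fintype.card F : ℝ) ((Fintype.card F : ℝ) ^ m) ρ ε hq1 hN hε hρ hΩ hS1 hS2
  convert main using 4
end

section
/- Let F be a finite field, let m ≥ 3 and d < |F| be natural numbers, let f : F^m → F, and let 0 < ε < ρ satisfy ρ − ε ≥ 2·√(d/|F|). Choose (x,y,z) uniformly at random among all triples in (F^m)³ such that y and z−x are linearly independent. Let L(x,y,z) be the set of all bivariate polynomials q over F of total degree at most d such that q(t₁,t₂) = f(x + t₁·y + t₂·(z−x)) for at least (ρ−ε)·|F|² of the pairs (t₁,t₂) ∈ F². Then the probability that there exist distinct q, q' ∈ L(x,y,z) with q(t,0) = q'(t,0) for all t ∈ F is at most 4d/((ρ−ε)²·|F|). -/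
open Finset

variable {F : Type*} [Field F] [Fintype F] [DecidableEq F] {m : ℕ}

/-- The point of the plane through `x = p.1` spanned by the directions `y = p.2.1` and
`z - x = p.2.2 - p.1`, at parameters `(t₁, t₂)`. -/
def planePoint (p : (Fin m → F) × (Fin m → F) × (Fin m → F)) (t : F × F) : Fin m → F :=
  p.1 + t.1 • p.2.1 + t.2 • (p.2.2 - p.1)

/-- `q ∈ L(x,y,z)`: `q` is a bivariate polynomial of total degree at most `d` agreeing with
`f` on at least a `θ` fraction of the points of the plane determined by `p = (x,y,z)`. -/
def InPlaneList (f : (Fin m → F) → F) (d : ℕ) (θ : ℝ)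
    (p : (Fin m → F) × (Fin m → F) × (Fin m → F)) (q : MvPolynomial (Fin 2) F) : Prop :=
  q.totalDegree ≤ d ∧
    θ * (Fintype.card F : ℝ) ^ 2 ≤
      (((Finset.univ : Finset (F × F)).filter fun t =>
          MvPolynomial.eval ![t.1, t.2] q = f (planePoint p t)).card : ℝ)

set_option linter.unusedSectionVars false
set_option linter.unusedVariables false

section Aux
open MvPolynomial

-- eval of univariate-valued aeval
lemma polyEval_aeval (g : Fin 2 → Polynomial F) (h : MvPolynomial (Fin 2) F) (t : F) :
    (MvPolynomial.aeval g h).eval t = MvPolynomial.eval (fun i => (g i).eval t) h := by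
  induction h using MvPolynomial.induction_on with
  | C a => simp
  | add p q hp hq => simp [hp, hq]
  | mul_X p i hp => simp [hp]

lemma aeval_poly_eq_sum (g : Fin 2 → Polynomial F) (h : MvPolynomial (Fin 2) F) :
    MvPolynomial.aeval g h
      = ∑ μ ∈ h.support, Polynomial.C (MvPolynomial.coeff μ h) * (g 0 ^ μ 0 * g 1 ^ μ 1) := by
  rw [MvPolynomial.aeval_def, MvPolynomial.eval₂_eq']
  refine Finset.sum_congr rfl fun μ _ => ?_
  rw [Fin.prod_univ_two]
  rfl

lemma coeff_sum_C_mul_X_pow {M : Type*} [DecidableEq M] (s : Finset M) (a : M → F) (E : M → ℕ)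
    (n : ℕ) :
    (∑ μ ∈ s, Polynomial.C (a μ) * Polynomial.X ^ (E μ)).coeff n
      = ∑ μ ∈ s.filter (fun μ => E μ = n), a μ := by
  rw [Polynomial.finset_sum_coeff, Finset.sum_filter]
  refine Finset.sum_congr rfl fun μ _ => ?_
  rw [Polynomial.coeff_C_mul, Polynomial.coeff_X_pow]
  by_cases hn : E μ = n
  · simp [hn]
  · simp only [hn, if_false]
    rw [if_neg (fun h => hn h.symm), mul_zero]

lemma degsum_fin2 (μ : Fin 2 →₀ ℕ) : (μ.sum fun _ e => e) = μ 0 + μ 1 := by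
  rw [Finsupp.sum_fintype _ _ (fun _ => rfl), Fin.sum_univ_two]

lemma aeval_eq_sum' {A : Type*} [CommRing A] [Algebra F A] (g : Fin 2 → A)
    (h : MvPolynomial (Fin 2) F) :
    MvPolynomial.aeval g h
      = ∑ μ ∈ h.support, algebraMap F A (MvPolynomial.coeff μ h) * (g 0 ^ μ 0 * g 1 ^ μ 1) := by
  rw [MvPolynomial.aeval_def, MvPolynomial.eval₂_eq']
  refine Finset.sum_congr rfl fun μ _ => ?_
  rw [Fin.prod_univ_two]

lemma natDegree_aeval_le (g : Fin 2 → Polynomial F) (hg : ∀ i, (g i).natDegree ≤ 1)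
    (h : MvPolynomial (Fin 2) F) :
    (MvPolynomial.aeval g h).natDegree ≤ h.totalDegree := by
  rw [aeval_eq_sum']
  refine Polynomial.natDegree_sum_le_of_forall_le _ _ fun μ hμ => ?_
  have h2 : (g 0 ^ μ 0 * g 1 ^ μ 1).natDegree ≤ μ 0 + μ 1 := by
    refine Polynomial.natDegree_mul_le.trans (add_le_add ?_ ?_) <;>
      refine Polynomial.natDegree_pow_le.trans ?_
    · calc μ 0 * (g 0).natDegree ≤ μ 0 * 1 := Nat.mul_le_mul_left _ (hg 0)
        _ = μ 0 := Nat.mul_one _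
    · calc μ 1 * (g 1).natDegree ≤ μ 1 * 1 := Nat.mul_le_mul_left _ (hg 1)
        _ = μ 1 := Nat.mul_one _
  have h3 : μ 0 + μ 1 ≤ h.totalDegree := by
    rw [← degsum_fin2]; exact MvPolynomial.le_totalDegree hμ
  calc ((algebraMap F (Polynomial F)) (MvPolynomial.coeff μ h) * (g 0 ^ μ 0 * g 1 ^ μ 1)).natDegree
      ≤ (g 0 ^ μ 0 * g 1 ^ μ 1).natDegree := Polynomial.natDegree_C_mul_le _ _
    _ ≤ μ 0 + μ 1 := h2
    _ ≤ h.totalDegree := h3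

lemma eval_line (c t : F) (h : MvPolynomial (Fin 2) F) :
    MvPolynomial.eval ![t, c * t] h
      = (MvPolynomial.aeval ![Polynomial.X, Polynomial.C c * Polynomial.X] h).eval t := by
  rw [polyEval_aeval]
  have : (fun i => (![Polynomial.X, Polynomial.C c * Polynomial.X] i).eval t) = ![t, c * t] := by
    funext i; fin_cases i <;> simp
  rw [this]

lemma eval_col (a b : F) (h : MvPolynomial (Fin 2) F) :
    MvPolynomial.eval ![a, b] h
      = (MvPolynomial.aeval ![Polynomial.C a, Polynomial.X] h).eval b := by
  rw [polyEval_aeval]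
  have : (fun i => (![Polynomial.C a, Polynomial.X] i).eval b) = ![a, b] := by
    funext i; fin_cases i <;> simp
  rw [this]

open scoped Classical in
lemma card_line_vanish {d : ℕ} (hd : d < Fintype.card F) (h : MvPolynomial (Fin 2) F)
    (h0 : h ≠ 0) (hdeg : h.totalDegree ≤ d) :
    ((univ.filter fun c : F => ∀ t : F, MvPolynomial.eval ![t, c * t] h = 0)).card ≤ d := by
  obtain ⟨μ₀, hμ₀⟩ := MvPolynomial.support_nonempty.2 h0
  set n := μ₀ 0 + μ₀ 1 with hn
  have hnd : n ≤ d := by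
    rw [hn, ← degsum_fin2]; exact (MvPolynomial.le_totalDegree hμ₀).trans hdeg
  set w : Polynomial F :=
    ∑ μ ∈ h.support.filter (fun μ => μ 0 + μ 1 = n),
      Polynomial.C (MvPolynomial.coeff μ h) * Polynomial.X ^ (μ 1) with hw
  -- the key coefficient identity
  have hcoeff : ∀ c : F,
      (MvPolynomial.aeval ![Polynomial.X, Polynomial.C c * Polynomial.X] h).coeff n
        = w.eval c := by
    intro c
    have : MvPolynomial.aeval ![Polynomial.X, Polynomial.C c * Polynomial.X] h
        = ∑ μ ∈ h.support,
            Polynomial.C (MvPolynomial.coeff μ h * c ^ (μ 1)) * Polynomial.X ^ (μ 0 + μ 1) := by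
      rw [aeval_eq_sum']
      refine Finset.sum_congr rfl fun μ _ => ?_
      show Polynomial.C (MvPolynomial.coeff μ h) *
          (Polynomial.X ^ μ 0 * (Polynomial.C c * Polynomial.X) ^ μ 1) = _
      rw [mul_pow, ← Polynomial.C_pow, pow_add, map_mul]
      ring
    rw [this, coeff_sum_C_mul_X_pow, hw, Polynomial.eval_finset_sum]
    simp only [Polynomial.eval_mul, Polynomial.eval_C, Polynomial.eval_pow, Polynomial.eval_X]
  have hsing : (h.support.filter fun μ => (μ 0 + μ 1 = n ∧ μ 1 = μ₀ 1)) = {μ₀} := by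
    ext μ
    simp only [Finset.mem_filter, Finset.mem_singleton]
    constructor
    · rintro ⟨hs, h1, h2⟩
      have h00 : μ 0 = μ₀ 0 := by omega
      ext i
      fin_cases i
      · exact h00
      · exact h2
    · rintro rfl
      exact ⟨hμ₀, rfl, rfl⟩
  have hw0 : w ≠ 0 := by
    intro hzero
    have : w.coeff (μ₀ 1) = MvPolynomial.coeff μ₀ h := by
      rw [hw, coeff_sum_C_mul_X_pow, Finset.filter_filter, hsing, Finset.sum_singleton]
    rw [hzero] at this
    exact (MvPolynomial.mem_support_iff.1 hμ₀) (by simpa using this.symm)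
  have hwdeg : w.natDegree ≤ d := by
    refine Polynomial.natDegree_sum_le_of_forall_le _ _ fun μ hμ => ?_
    refine (Polynomial.natDegree_C_mul_le _ _).trans ?_
    refine (Polynomial.natDegree_X_pow_le _).trans ?_
    have := (Finset.mem_filter.1 hμ).2
    omega
  refine le_trans ?_ ((Multiset.toFinset_card_le w.roots).trans
    ((Polynomial.card_roots' w).trans hwdeg))
  refine Finset.card_le_card fun c hc => ?_
  have hc' := (Finset.mem_filter.1 hc).2
  have hP : MvPolynomial.aeval ![Polynomial.X, Polynomial.C c * Polynomial.X] h = 0 := by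
    refine Polynomial.eq_zero_of_natDegree_lt_card_of_eval_eq_zero _ Function.injective_id
      (fun t => ?_) (lt_of_le_of_lt ((natDegree_aeval_le _ ?_ h).trans hdeg) hd)
    · rw [← eval_line]; exact hc' t
    · intro i; fin_cases i <;> simp [Polynomial.natDegree_X]
      · exact Polynomial.natDegree_C_mul_le _ _ |>.trans (by simp)
  rw [Multiset.mem_toFinset, Polynomial.mem_roots hw0]
  show w.eval c = 0
  rw [← hcoeff c, hP]
  simp

open scoped Classical in
lemma card_col_vanish {d : ℕ} (h : MvPolynomial (Fin 2) F)
    (h0 : h ≠ 0) (hdeg : h.totalDegree ≤ d) :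
    ((univ.filter fun a : F =>
      MvPolynomial.aeval ![Polynomial.C a, Polynomial.X] h = 0)).card ≤ d := by
  obtain ⟨μ₀, hμ₀⟩ := MvPolynomial.support_nonempty.2 h0
  set w : Polynomial F :=
    ∑ μ ∈ h.support.filter (fun μ => μ 1 = μ₀ 1),
      Polynomial.C (MvPolynomial.coeff μ h) * Polynomial.X ^ (μ 0) with hw
  have hcoeff : ∀ a : F,
      (MvPolynomial.aeval ![Polynomial.C a, Polynomial.X] h).coeff (μ₀ 1) = w.eval a := by
    intro a
    have : MvPolynomial.aeval ![Polynomial.C a, Polynomial.X] h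
        = ∑ μ ∈ h.support,
            Polynomial.C (MvPolynomial.coeff μ h * a ^ (μ 0)) * Polynomial.X ^ (μ 1) := by
      rw [aeval_eq_sum']
      refine Finset.sum_congr rfl fun μ _ => ?_
      show Polynomial.C (MvPolynomial.coeff μ h) *
          ((Polynomial.C a) ^ μ 0 * Polynomial.X ^ μ 1) = _
      rw [← Polynomial.C_pow, map_mul]
      ring
    rw [this, coeff_sum_C_mul_X_pow, hw, Polynomial.eval_finset_sum]
    simp only [Polynomial.eval_mul, Polynomial.eval_C, Polynomial.eval_pow, Polynomial.eval_X]
  have hsing : (h.support.filter fun μ => (μ 1 = μ₀ 1 ∧ μ 0 = μ₀ 0)) = {μ₀} := by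
    ext μ
    simp only [Finset.mem_filter, Finset.mem_singleton]
    constructor
    · rintro ⟨hs, h1, h2⟩
      ext i
      fin_cases i
      · exact h2
      · exact h1
    · rintro rfl
      exact ⟨hμ₀, rfl, rfl⟩
  have hw0 : w ≠ 0 := by
    intro hzero
    have : w.coeff (μ₀ 0) = MvPolynomial.coeff μ₀ h := by
      rw [hw, coeff_sum_C_mul_X_pow, Finset.filter_filter, hsing, Finset.sum_singleton]
    rw [hzero] at this
    exact (MvPolynomial.mem_support_iff.1 hμ₀) (by simpa using this.symm)
  have hwdeg : w.natDegree ≤ d := by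
    refine Polynomial.natDegree_sum_le_of_forall_le _ _ fun μ hμ => ?_
    refine (Polynomial.natDegree_C_mul_le _ _).trans ?_
    refine (Polynomial.natDegree_X_pow_le _).trans ?_
    have h1 := Finset.mem_filter.1 hμ
    have : μ 0 + μ 1 ≤ d := by
      rw [← degsum_fin2]; exact (MvPolynomial.le_totalDegree h1.1).trans hdeg
    omega
  refine le_trans ?_ ((Multiset.toFinset_card_le w.roots).trans
    ((Polynomial.card_roots' w).trans hwdeg))
  refine Finset.card_le_card fun a ha => ?_
  have ha' := (Finset.mem_filter.1 ha).2
  rw [Multiset.mem_toFinset, Polynomial.mem_roots hw0]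
  show w.eval a = 0
  rw [← hcoeff a, ha']
  simp

open scoped Classical in
lemma card_zeros_le {d : ℕ} (h : MvPolynomial (Fin 2) F)
    (h0 : h ≠ 0) (hdeg : h.totalDegree ≤ d) :
    ((univ : Finset (F × F)).filter fun t => MvPolynomial.eval ![t.1, t.2] h = 0).card
      ≤ 2 * d * Fintype.card F := by
  set Z := (univ : Finset (F × F)).filter fun t => MvPolynomial.eval ![t.1, t.2] h = 0 with hZ
  have hfibers : Z.card = ∑ a ∈ (univ : Finset F), (Z.filter fun t => t.1 = a).card :=
    Finset.card_eq_sum_card_fiberwise (fun t _ => Finset.mem_univ t.1)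
  have hbound : ∀ a : F, (Z.filter fun t => t.1 = a).card
      ≤ if MvPolynomial.aeval ![Polynomial.C a, Polynomial.X] h = 0 then Fintype.card F else d := by
    intro a
    by_cases hPa : MvPolynomial.aeval ![Polynomial.C a, Polynomial.X] h = 0
    · rw [if_pos hPa]
      calc (Z.filter fun t => t.1 = a).card
          ≤ (univ : Finset F).card := by
            refine Finset.card_le_card_of_injOn (fun t => t.2) (fun t _ => Finset.mem_univ _) ?_
            intro t ht s hs hts
            have h1 : t.1 = a := (Finset.mem_filter.1 ht).2
            have h2 : s.1 = a := (Finset.mem_filter.1 hs).2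
            exact Prod.ext (h1.trans h2.symm) hts
        _ = Fintype.card F := Finset.card_univ
    · rw [if_neg hPa]
      have hdegPa : (MvPolynomial.aeval ![Polynomial.C a, Polynomial.X] h).natDegree ≤ d := by
        refine (natDegree_aeval_le _ ?_ h).trans hdeg
        intro i; fin_cases i <;> simp
      refine le_trans ?_ ((Multiset.toFinset_card_le _).trans
        ((Polynomial.card_roots' _).trans hdegPa))
      refine Finset.card_le_card_of_injOn (fun t => t.2) ?_ ?_
      · intro t ht
        have h1 := Finset.mem_filter.1 ht
        have h2 := Finset.mem_filter.1 h1.1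
        rw [Finset.mem_coe, Multiset.mem_toFinset, Polynomial.mem_roots hPa]
        show (MvPolynomial.aeval ![Polynomial.C a, Polynomial.X] h).eval t.2 = 0
        rw [← eval_col]
        rw [show ![a, t.2] = ![t.1, t.2] by rw [h1.2]]
        exact h2.2
      · intro t ht s hs hts
        have h1 : t.1 = a := (Finset.mem_filter.1 ht).2
        have h2 : s.1 = a := (Finset.mem_filter.1 hs).2
        exact Prod.ext (h1.trans h2.symm) hts
  have hsplit : ∑ a ∈ (univ : Finset F),
      (if MvPolynomial.aeval ![Polynomial.C a, Polynomial.X] h = 0 then Fintype.card F else d)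
      ≤ 2 * d * Fintype.card F := by
    rw [Finset.sum_ite, Finset.sum_const, Finset.sum_const, smul_eq_mul, smul_eq_mul]
    have hbad := card_col_vanish (d := d) h h0 hdeg
    have hgood : ((univ : Finset F).filter fun a =>
        ¬ MvPolynomial.aeval ![Polynomial.C a, Polynomial.X] h = 0).card ≤ Fintype.card F :=
      (Finset.card_filter_le _ _).trans_eq (Finset.card_univ)
    calc _ ≤ d * Fintype.card F + Fintype.card F * d := by
          exact Nat.add_le_add (Nat.mul_le_mul_right _ hbad) (Nat.mul_le_mul_right _ hgood)
      _ = 2 * d * Fintype.card F := by ring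
  calc Z.card = _ := hfibers
    _ ≤ _ := Finset.sum_le_sum fun a _ => hbound a
    _ ≤ 2 * d * Fintype.card F := hsplit

/-- Substitution `X 0 ↦ X 0`, `X 1 ↦ X 1 + c • X 0` on bivariate polynomials. -/
noncomputable def shearPoly (c : F) : MvPolynomial (Fin 2) F →ₐ[F] MvPolynomial (Fin 2) F :=
  MvPolynomial.bind₁ ![MvPolynomial.X 0, MvPolynomial.X 1 + MvPolynomial.C c * MvPolynomial.X 0]

lemma eval_shearPoly (c : F) (q : MvPolynomial (Fin 2) F) (v : Fin 2 → F) :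
    MvPolynomial.eval v (shearPoly c q) = MvPolynomial.eval ![v 0, v 1 + c * v 0] q := by
  rw [shearPoly, show (MvPolynomial.eval v : MvPolynomial (Fin 2) F → F)
    = MvPolynomial.aeval v from rfl, MvPolynomial.aeval_bind₁]
  have : (fun i => MvPolynomial.aeval v
      (![MvPolynomial.X 0, MvPolynomial.X 1 + MvPolynomial.C c * MvPolynomial.X 0] i))
      = ![v 0, v 1 + c * v 0] := by
    funext i
    fin_cases i <;> simp
  rw [this]
  rfl

lemma shearPoly_shearPoly (c : F) (q : MvPolynomial (Fin 2) F) :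
    shearPoly c (shearPoly (-c) q) = q := by
  rw [shearPoly, shearPoly, MvPolynomial.bind₁_bind₁]
  have : (fun i => MvPolynomial.bind₁
      ![MvPolynomial.X 0, MvPolynomial.X 1 + MvPolynomial.C c * MvPolynomial.X 0]
      (![MvPolynomial.X 0, MvPolynomial.X 1 + MvPolynomial.C (-c) * MvPolynomial.X 0] i))
      = (MvPolynomial.X : Fin 2 → MvPolynomial (Fin 2) F) := by
    funext i
    fin_cases i <;> simp [MvPolynomial.bind₁_X_right]
  rw [this, MvPolynomial.bind₁_X_left]
  rfl

lemma shearPoly_injective (c : F) : Function.Injective (shearPoly (-c) : MvPolynomial (Fin 2) F → MvPolynomial (Fin 2) F) := by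
  intro a b hab
  have := congrArg (shearPoly c) hab
  rwa [shearPoly_shearPoly, shearPoly_shearPoly] at this

lemma totalDegree_shearPoly_le (c : F) (q : MvPolynomial (Fin 2) F) :
    (shearPoly c q).totalDegree ≤ q.totalDegree := by
  rw [shearPoly, MvPolynomial.bind₁, aeval_eq_sum']
  refine MvPolynomial.totalDegree_finsetSum_le fun μ hμ => ?_
  have hg : ∀ i, ((![MvPolynomial.X 0, MvPolynomial.X 1 + MvPolynomial.C c * MvPolynomial.X 0] :
      Fin 2 → MvPolynomial (Fin 2) F) i).totalDegree ≤ 1 := by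
    intro i
    fin_cases i
    · simp [MvPolynomial.totalDegree_X]
    · refine (MvPolynomial.totalDegree_add _ _).trans ?_
      simp only [MvPolynomial.totalDegree_X]
      refine max_le le_rfl ?_
      refine (MvPolynomial.totalDegree_mul _ _).trans ?_
      simp [MvPolynomial.totalDegree_X, MvPolynomial.totalDegree_C]
  calc ((algebraMap F (MvPolynomial (Fin 2) F)) (MvPolynomial.coeff μ q) * (_ ^ μ 0 * _ ^ μ 1)).totalDegree
      ≤ _ := MvPolynomial.totalDegree_mul _ _
    _ ≤ μ 0 + μ 1 := by
        have hC : ((algebraMap F (MvPolynomial (Fin 2) F)) (MvPolynomial.coeff μ q)).totalDegree = 0 :=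
          MvPolynomial.totalDegree_C _
        rw [hC, zero_add]
        refine (MvPolynomial.totalDegree_mul _ _).trans ?_
        refine add_le_add ((MvPolynomial.totalDegree_pow _ _).trans ?_)
          ((MvPolynomial.totalDegree_pow _ _).trans ?_)
        · calc μ 0 * _ ≤ μ 0 * 1 := Nat.mul_le_mul_left _ (hg 0)
            _ = μ 0 := Nat.mul_one _
        · calc μ 1 * _ ≤ μ 1 * 1 := Nat.mul_le_mul_left _ (hg 1)
            _ = μ 1 := Nat.mul_one _
    _ ≤ q.totalDegree := by rw [← degsum_fin2]; exact MvPolynomial.le_totalDegree hμ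

open scoped Classical in
lemma johnson_bound {ι : Type*} (K : Finset ι) (A : ι → Finset (F × F)) (θ : ℝ)
    (hθ : 0 < θ)
    (hlow : ∀ k ∈ K, θ * (Fintype.card F : ℝ) ^ 2 ≤ ((A k).card : ℝ))
    (hpair : ∀ k ∈ K, ∀ k' ∈ K, k ≠ k' →
      (((A k ∩ A k').card : ℝ) ≤ θ ^ 2 * (Fintype.card F : ℝ) ^ 2 / 2)) :
    (K.card : ℝ) * θ ≤ 2 := by
  by_contra hcon
  push_neg at hcon
  have hF0 : (0 : ℝ) < (Fintype.card F : ℝ) := by exact_mod_cast Fintype.card_pos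
  set N : ℝ := (Fintype.card F : ℝ) ^ 2 with hN
  have hN0 : 0 < N := by positivity
  set cnt : F × F → ℕ := fun t => (K.filter fun k => t ∈ A k).card with hcnt
  set S : ℝ := ∑ t ∈ (univ : Finset (F × F)), (cnt t : ℝ) with hS
  -- sum of counts equals sum of card of the A's
  have hS1 : S = ∑ k ∈ K, ((A k).card : ℝ) := by
    rw [hS]
    simp only [hcnt, Finset.natCast_card_filter]
    rw [Finset.sum_comm' (s := univ) (t' := K) (t := fun _ => K) (s' := fun _ => univ)
      (f := fun t k => if t ∈ A k then (1 : ℝ) else 0)]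
    · refine Finset.sum_congr rfl fun k _ => ?_
      rw [Finset.sum_ite_mem, Finset.univ_inter, Finset.sum_const, nsmul_eq_mul, mul_one]
    · intro x y; simp [and_comm]
  have hKS : θ * N * (K.card : ℝ) ≤ S := by
    rw [hS1]
    calc θ * N * (K.card : ℝ) = ∑ _k ∈ K, θ * N := by rw [Finset.sum_const, nsmul_eq_mul]; ring
      _ ≤ ∑ k ∈ K, ((A k).card : ℝ) := Finset.sum_le_sum fun k hk => hlow k hk
  have hCS : S ^ 2 ≤ N * ∑ t ∈ (univ : Finset (F × F)), (cnt t : ℝ) ^ 2 := by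
    have := sq_sum_le_card_mul_sum_sq (s := (univ : Finset (F × F)))
      (f := fun t => (cnt t : ℝ))
    have hcard : ((univ : Finset (F × F)).card : ℝ) = N := by
      rw [Finset.card_univ, Fintype.card_prod, hN]
      push_cast
      ring
    rw [hS]
    calc (∑ t ∈ (univ : Finset (F × F)), (cnt t : ℝ)) ^ 2
        ≤ ((univ : Finset (F × F)).card : ℝ) * ∑ t, (cnt t : ℝ) ^ 2 := by exact_mod_cast this
      _ = N * ∑ t, (cnt t : ℝ) ^ 2 := by rw [hcard]
  have hsq : (∑ t ∈ (univ : Finset (F × F)), (cnt t : ℝ) ^ 2)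
      = ∑ k ∈ K, ∑ k' ∈ K, ((A k ∩ A k').card : ℝ) := by
    have hterm : ∀ t : F × F, (cnt t : ℝ) ^ 2
        = ∑ k ∈ K, ∑ k' ∈ K, (if t ∈ A k ∧ t ∈ A k' then (1:ℝ) else 0) := by
      intro t
      rw [hcnt]
      simp only [Finset.natCast_card_filter]
      rw [pow_two, Finset.sum_mul_sum]
      refine Finset.sum_congr rfl fun k _ => Finset.sum_congr rfl fun k' _ => ?_
      by_cases h1 : t ∈ A k <;> by_cases h2 : t ∈ A k' <;> simp [h1, h2]
    rw [Finset.sum_congr rfl fun t _ => hterm t]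
    rw [Finset.sum_comm]
    refine Finset.sum_congr rfl fun k _ => ?_
    rw [Finset.sum_comm]
    refine Finset.sum_congr rfl fun k' _ => ?_
    rw [← Finset.filter_univ_mem (A k ∩ A k'), Finset.natCast_card_filter]
    refine Finset.sum_congr rfl fun t _ => ?_
    by_cases h1 : t ∈ A k <;> by_cases h2 : t ∈ A k' <;>
      simp [h1, h2, Finset.mem_inter]
  have hdiag : (∑ k ∈ K, ∑ k' ∈ K, ((A k ∩ A k').card : ℝ))
      ≤ S + (K.card : ℝ) ^ 2 * (θ ^ 2 * N / 2) := by
    have hper : ∀ k ∈ K, (∑ k' ∈ K, ((A k ∩ A k').card : ℝ))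
        ≤ ((A k).card : ℝ) + (K.card : ℝ) * (θ ^ 2 * N / 2) := by
      intro k hk
      rw [← Finset.add_sum_erase _ _ hk, Finset.inter_self]
      refine add_le_add le_rfl ?_
      calc (∑ k' ∈ K.erase k, ((A k ∩ A k').card : ℝ))
          ≤ ∑ k' ∈ K.erase k, θ ^ 2 * N / 2 := by
            refine Finset.sum_le_sum fun k' hk' => ?_
            exact hpair k hk k' (Finset.mem_of_mem_erase hk')
              (fun h => (Finset.ne_of_mem_erase hk') h.symm)
        _ = ((K.erase k).card : ℝ) * (θ ^ 2 * N / 2) := by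
            rw [Finset.sum_const, nsmul_eq_mul]
        _ ≤ (K.card : ℝ) * (θ ^ 2 * N / 2) := by
            have : ((K.erase k).card : ℝ) ≤ (K.card : ℝ) := by
              exact_mod_cast Finset.card_le_card (Finset.erase_subset _ _)
            have hpos : (0:ℝ) ≤ θ ^ 2 * N / 2 := by positivity
            exact mul_le_mul_of_nonneg_right this hpos
    calc (∑ k ∈ K, ∑ k' ∈ K, ((A k ∩ A k').card : ℝ))
        ≤ ∑ k ∈ K, (((A k).card : ℝ) + (K.card : ℝ) * (θ ^ 2 * N / 2)) :=
          Finset.sum_le_sum hper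
      _ = S + (K.card : ℝ) * ((K.card : ℝ) * (θ ^ 2 * N / 2)) := by
          rw [Finset.sum_add_distrib, ← hS1, Finset.sum_const, nsmul_eq_mul]
      _ = S + (K.card : ℝ) ^ 2 * (θ ^ 2 * N / 2) := by ring
  -- final contradiction
  have hkey : S ^ 2 ≤ N * S + N * ((K.card : ℝ) ^ 2 * (θ ^ 2 * N / 2)) := by
    calc S ^ 2 ≤ N * ∑ t ∈ (univ : Finset (F × F)), (cnt t : ℝ) ^ 2 := hCS
      _ = N * (∑ k ∈ K, ∑ k' ∈ K, ((A k ∩ A k').card : ℝ)) := by rw [hsq]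
      _ ≤ N * (S + (K.card : ℝ) ^ 2 * (θ ^ 2 * N / 2)) := by
          exact mul_le_mul_of_nonneg_left hdiag (le_of_lt hN0)
      _ = N * S + N * ((K.card : ℝ) ^ 2 * (θ ^ 2 * N / 2)) := by ring
  set k : ℝ := (K.card : ℝ) with hkk
  have hk0 : 0 ≤ k := by positivity
  have hS2N : 2 * N < S := by
    calc 2 * N < k * θ * N := by nlinarith
      _ ≤ S := by nlinarith [hKS]
  have hS0 : 0 < S := lt_trans (by positivity) hS2N
  have h1 : (θ * N * k) ^ 2 ≤ S ^ 2 := pow_le_pow_left₀ (by positivity) hKS 2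
  have h3 := mul_lt_mul_of_pos_right hS2N hS0
  nlinarith [hkey, h1, h3]
open scoped Classical in
lemma card_badslope_le {m : ℕ} (f : (Fin m → F) → F) {d : ℕ} (hd : d < Fintype.card F)
    (θ : ℝ) (hθ : 0 < θ) (hθd : 4 * (d : ℝ) / (Fintype.card F : ℝ) ≤ θ ^ 2)
    (p : (Fin m → F) × (Fin m → F) × (Fin m → F)) :
    ((univ.filter fun c : F => ∃ q q' : MvPolynomial (Fin 2) F,
      InPlaneList f d θ p q ∧ InPlaneList f d θ p q' ∧ q ≠ q' ∧
      ∀ t : F, MvPolynomial.eval ![t, c * t] q = MvPolynomial.eval ![t, c * t] q').card : ℝ)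
      ≤ 4 * (d : ℝ) / θ ^ 2 := by
  have hF0 : (0 : ℝ) < (Fintype.card F : ℝ) := by exact_mod_cast Fintype.card_pos
  set A : MvPolynomial (Fin 2) F → Finset (F × F) := fun q =>
    (univ : Finset (F × F)).filter fun t =>
      MvPolynomial.eval ![t.1, t.2] q = f (planePoint p t) with hA
  have hInA : ∀ q, InPlaneList f d θ p q →
      q.totalDegree ≤ d ∧ θ * (Fintype.card F : ℝ) ^ 2 ≤ ((A q).card : ℝ) := by
    intro q hq
    obtain ⟨h1, h2⟩ := hq
    refine ⟨h1, le_trans h2 ?_⟩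
    rw [hA]
  set C := univ.filter fun c : F => ∃ q q' : MvPolynomial (Fin 2) F,
      InPlaneList f d θ p q ∧ InPlaneList f d θ p q' ∧ q ≠ q' ∧
      ∀ t : F, MvPolynomial.eval ![t, c * t] q = MvPolynomial.eval ![t, c * t] q' with hC
  set pr : F → MvPolynomial (Fin 2) F × MvPolynomial (Fin 2) F := fun c =>
    if h : ∃ q q' : MvPolynomial (Fin 2) F,
        InPlaneList f d θ p q ∧ InPlaneList f d θ p q' ∧ q ≠ q' ∧
        ∀ t : F, MvPolynomial.eval ![t, c * t] q = MvPolynomial.eval ![t, c * t] q'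
      then (h.choose, h.choose_spec.choose) else (0, 0) with hpr
  have hprspec : ∀ c ∈ C, InPlaneList f d θ p (pr c).1 ∧ InPlaneList f d θ p (pr c).2 ∧
      (pr c).1 ≠ (pr c).2 ∧
      ∀ t : F, MvPolynomial.eval ![t, c * t] (pr c).1
        = MvPolynomial.eval ![t, c * t] (pr c).2 := by
    intro c hc
    have h := (Finset.mem_filter.1 hc).2
    rw [hpr]
    simp only [dif_pos h]
    exact ⟨h.choose_spec.choose_spec.1, h.choose_spec.choose_spec.2.1,
      h.choose_spec.choose_spec.2.2.1, h.choose_spec.choose_spec.2.2.2⟩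
  set K := (C.image fun c => (pr c).1) ∪ (C.image fun c => (pr c).2) with hK
  have hKgood : ∀ k ∈ K, InPlaneList f d θ p k := by
    intro k hk
    rcases Finset.mem_union.1 hk with hk | hk <;> obtain ⟨c, hc, rfl⟩ := Finset.mem_image.1 hk
    · exact (hprspec c hc).1
    · exact (hprspec c hc).2.1
  -- Johnson bound
  have hjohnson : (K.card : ℝ) * θ ≤ 2 := by
    refine johnson_bound K A θ hθ (fun k hk => (hInA k (hKgood k hk)).2) ?_
    intro k hk k' hk' hne
    have hdk := (hInA k (hKgood k hk)).1
    have hdk' := (hInA k' (hKgood k' hk')).1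
    have hsub : k - k' ≠ 0 := sub_ne_zero.2 hne
    have hsubdeg : (k - k').totalDegree ≤ d := by
      rw [sub_eq_add_neg]
      refine (MvPolynomial.totalDegree_add _ _).trans (max_le hdk ?_)
      rw [MvPolynomial.totalDegree_neg]
      exact hdk'
    have hzero := card_zeros_le (d := d) (k - k') hsub hsubdeg
    have hsubset : A k ∩ A k' ⊆
        (univ : Finset (F × F)).filter fun t => MvPolynomial.eval ![t.1, t.2] (k - k') = 0 := by
      intro t ht
      obtain ⟨ht1, ht2⟩ := Finset.mem_inter.1 ht
      rw [hA] at ht1 ht2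
      have e1 := (Finset.mem_filter.1 ht1).2
      have e2 := (Finset.mem_filter.1 ht2).2
      rw [Finset.mem_filter]
      exact ⟨Finset.mem_univ _, by rw [map_sub, e1, e2, sub_self]⟩
    calc ((A k ∩ A k').card : ℝ)
        ≤ (2 * d * Fintype.card F : ℕ) := by
          exact_mod_cast Nat.le_trans (Finset.card_le_card hsubset) hzero
      _ ≤ θ ^ 2 * (Fintype.card F : ℝ) ^ 2 / 2 := by
          push_cast
          rw [div_le_iff₀ hF0] at hθd
          nlinarith [mul_le_mul_of_nonneg_right hθd (le_of_lt hF0), hF0]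
  -- each pair accounts for at most d slopes
  have hfiber : C.card ≤ d * (C.image pr).card := by
    refine Finset.card_le_mul_card_image _ _ ?_
    intro ab hab
    obtain ⟨c₀, hc₀, hcab⟩ := Finset.mem_image.1 hab
    have hspec₀ := hprspec c₀ hc₀
    rw [hcab] at hspec₀
    have hne : ab.1 - ab.2 ≠ 0 := sub_ne_zero.2 hspec₀.2.2.1
    have hdeg : (ab.1 - ab.2).totalDegree ≤ d := by
      rw [sub_eq_add_neg]
      refine (MvPolynomial.totalDegree_add _ _).trans (max_le (hInA _ hspec₀.1).1 ?_)
      rw [MvPolynomial.totalDegree_neg]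
      exact (hInA _ hspec₀.2.1).1
    refine le_trans (Finset.card_le_card ?_) (card_line_vanish hd _ hne hdeg)
    intro c hc
    obtain ⟨hcC, hcab'⟩ := Finset.mem_filter.1 hc
    have hspec := hprspec c hcC
    rw [hcab'] at hspec
    rw [Finset.mem_filter]
    refine ⟨Finset.mem_univ _, fun t => ?_⟩
    rw [map_sub, hspec.2.2.2 t, sub_self]
  have himage : (C.image pr).card ≤ K.card * K.card := by
    calc (C.image pr).card ≤ (K ×ˢ K).card := by
          refine Finset.card_le_card fun ab hab => ?_
          obtain ⟨c, hc, rfl⟩ := Finset.mem_image.1 hab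
          rw [Finset.mem_product]
          constructor
          · exact Finset.mem_union_left _ (Finset.mem_image_of_mem _ hc)
          · exact Finset.mem_union_right _ (Finset.mem_image_of_mem _ hc)
      _ = K.card * K.card := Finset.card_product _ _
  -- combine
  have hCd : (C.card : ℝ) ≤ (d : ℝ) * ((K.card : ℝ) * (K.card : ℝ)) := by
    have h : C.card ≤ d * (K.card * K.card) := hfiber.trans (Nat.mul_le_mul_left _ himage)
    exact_mod_cast h
  have hk0 : (0 : ℝ) ≤ (K.card : ℝ) := Nat.cast_nonneg _
  have hd0 : (0:ℝ) ≤ (d:ℝ) := Nat.cast_nonneg _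
  have h1 : (K.card:ℝ) * θ * ((K.card:ℝ) * θ) ≤ 2 * 2 :=
    mul_le_mul hjohnson hjohnson (mul_nonneg hk0 hθ.le) (by norm_num)
  have h2 : (C.card:ℝ) * θ^2 ≤ (d:ℝ) * ((K.card:ℝ) * (K.card:ℝ)) * θ^2 :=
    mul_le_mul_of_nonneg_right hCd (sq_nonneg θ)
  rw [le_div_iff₀ (by positivity : (0:ℝ) < θ ^ 2)]
  nlinarith [mul_le_mul_of_nonneg_left h1 hd0, h2]

lemma planePoint_shear {m : ℕ} (c : F) (p : (Fin m → F) × (Fin m → F) × (Fin m → F))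
    (t : F × F) :
    planePoint (p.1, p.2.1 + c • (p.2.2 - p.1), p.2.2) t
      = planePoint p (t.1, c * t.1 + t.2) := by
  funext i
  simp only [planePoint, Pi.add_apply, Pi.smul_apply, Pi.sub_apply, smul_eq_mul]
  ring

lemma li_shear {m : ℕ} (c : F) (a b : Fin m → F) (h : LinearIndependent F ![a, b]) :
    LinearIndependent F ![a + c • b, b] := by
  rw [linearIndependent_fin2] at h ⊢
  simp only [Matrix.cons_val_one, Matrix.head_cons, Matrix.cons_val_zero] at h ⊢
  refine ⟨h.1, fun s hs => ?_⟩
  refine h.2 (s - c) ?_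
  rw [sub_smul, hs]
  abel

open scoped Classical in
lemma inplane_shear {m : ℕ} (f : (Fin m → F) → F) {d : ℕ} (θ : ℝ) (c : F)
    (p : (Fin m → F) × (Fin m → F) × (Fin m → F)) (q : MvPolynomial (Fin 2) F)
    (h : InPlaneList f d θ (p.1, p.2.1 + c • (p.2.2 - p.1), p.2.2) q) :
    InPlaneList f d θ p (shearPoly (-c) q) := by
  obtain ⟨h1, h2⟩ := h
  refine ⟨(totalDegree_shearPoly_le _ _).trans h1, le_trans h2 (le_of_eq ?_)⟩
  norm_cast
  refine Finset.card_nbij' (fun t => (t.1, c * t.1 + t.2)) (fun s => (s.1, s.2 - c * s.1))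
    ?_ ?_ ?_ ?_
  · intro t ht
    rw [Finset.mem_coe, Finset.mem_filter] at ht ⊢
    refine ⟨Finset.mem_univ _, ?_⟩
    have he : MvPolynomial.eval ![(t.1, c * t.1 + t.2).1, (t.1, c * t.1 + t.2).2]
        (shearPoly (-c) q) = MvPolynomial.eval ![t.1, t.2] q := by
      rw [eval_shearPoly]
      have hv : (![(t.1, c * t.1 + t.2).1, (t.1, c * t.1 + t.2).2] : Fin 2 → F) 0 = t.1 := rfl
      have hv1 : (![(t.1, c * t.1 + t.2).1, (t.1, c * t.1 + t.2).2] : Fin 2 → F) 1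
          = c * t.1 + t.2 := rfl
      rw [hv, hv1]
      have hvec : (![t.1, c * t.1 + t.2 + -c * t.1] : Fin 2 → F) = ![t.1, t.2] := by
        funext i
        fin_cases i
        · rfl
        · show c * t.1 + t.2 + -c * t.1 = t.2
          ring
      rw [hvec]
    rw [he, ht.2, planePoint_shear]
  · intro s hs
    rw [Finset.mem_coe, Finset.mem_filter] at hs ⊢
    refine ⟨Finset.mem_univ _, ?_⟩
    have he : MvPolynomial.eval ![s.1, s.2] (shearPoly (-c) q)
        = MvPolynomial.eval ![(s.1, s.2 - c * s.1).1, (s.1, s.2 - c * s.1).2] q := by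
      rw [eval_shearPoly]
      have hvec : (![(![s.1, s.2] : Fin 2 → F) 0,
          (![s.1, s.2] : Fin 2 → F) 1 + -c * (![s.1, s.2] : Fin 2 → F) 0] : Fin 2 → F)
          = ![(s.1, s.2 - c * s.1).1, (s.1, s.2 - c * s.1).2] := by
        funext i
        fin_cases i
        · rfl
        · show s.2 + -c * s.1 = s.2 - c * s.1
          ring
      rw [hvec]
    rw [← he, hs.2, planePoint_shear]
    have : (c * s.1 + (s.1, s.2 - c * s.1).2) = s.2 := by
      show c * s.1 + (s.2 - c * s.1) = s.2
      ring
    rw [show ((s.1, s.2 - c * s.1).1, c * (s.1, s.2 - c * s.1).1 + (s.1, s.2 - c * s.1).2)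
      = (s.1, s.2) from by simp only []; rw [this]]
  · intro t _
    simp only []
    rw [show c * t.1 + t.2 - c * t.1 = t.2 from by ring]
  · intro s _
    simp only []
    rw [show c * s.1 + (s.2 - c * s.1) = s.2 from by ring]

open scoped Classical in
lemma bad_shear {m : ℕ} (f : (Fin m → F) → F) {d : ℕ} (θ : ℝ) (c : F)
    (p : (Fin m → F) × (Fin m → F) × (Fin m → F))
    (h : ∃ q q' : MvPolynomial (Fin 2) F,
      InPlaneList f d θ (p.1, p.2.1 + c • (p.2.2 - p.1), p.2.2) q ∧
      InPlaneList f d θ (p.1, p.2.1 + c • (p.2.2 - p.1), p.2.2) q' ∧ q ≠ q' ∧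
      ∀ t : F, MvPolynomial.eval ![t, 0] q = MvPolynomial.eval ![t, 0] q') :
    ∃ q q' : MvPolynomial (Fin 2) F,
      InPlaneList f d θ p q ∧ InPlaneList f d θ p q' ∧ q ≠ q' ∧
      ∀ t : F, MvPolynomial.eval ![t, c * t] q = MvPolynomial.eval ![t, c * t] q' := by
  obtain ⟨q, q', h1, h2, hne, hline⟩ := h
  refine ⟨shearPoly (-c) q, shearPoly (-c) q', inplane_shear f θ c p q h1,
    inplane_shear f θ c p q' h2, fun hEq => hne (shearPoly_injective c hEq), fun t => ?_⟩
  have key : ∀ r : MvPolynomial (Fin 2) F,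
      MvPolynomial.eval ![t, c * t] (shearPoly (-c) r) = MvPolynomial.eval ![t, 0] r := by
    intro r
    rw [eval_shearPoly]
    have hvec : (![(![t, c * t] : Fin 2 → F) 0,
        (![t, c * t] : Fin 2 → F) 1 + -c * (![t, c * t] : Fin 2 → F) 0] : Fin 2 → F)
        = ![t, 0] := by
      funext i
      fin_cases i
      · rfl
      · show c * t + -c * t = 0
        ring
    rw [hvec]
  rw [key, key, hline t]

end Aux

open scoped Classical in
/-- for a uniformly random triple `(x,y,z)` with `y` and `z-x` linearly
independent, the probability that the list `L(x,y,z)` contains two distinct polynomials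
agreeing on the line `t₂ = 0` is at most `4d/((ρ-ε)²·|F|)`. -/
theorem rm_plane_list_uniqueness (m d : ℕ) (hm : 3 ≤ m) (hd : d < Fintype.card F)
    (f : (Fin m → F) → F)
    (ρ ε : ℝ) (hε : 0 < ε) (hερ : ε < ρ)
    (hgap : 2 * Real.sqrt ((d : ℝ) / (Fintype.card F : ℝ)) ≤ ρ - ε) :
    ((((Finset.univ : Finset ((Fin m → F) × (Fin m → F) × (Fin m → F))).filter fun p =>
          LinearIndependent F ![p.2.1, p.2.2 - p.1]).filter fun p =>
          ∃ q q' : MvPolynomial (Fin 2) F,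
            InPlaneList f d (ρ - ε) p q ∧ InPlaneList f d (ρ - ε) p q' ∧ q ≠ q' ∧
            ∀ t : F,
              MvPolynomial.eval ![t, 0] q = MvPolynomial.eval ![t, 0] q').card : ℝ) /
      (((Finset.univ : Finset ((Fin m → F) × (Fin m → F) × (Fin m → F))).filter fun p =>
          LinearIndependent F ![p.2.1, p.2.2 - p.1]).card : ℝ) ≤
    4 * (d : ℝ) / ((ρ - ε) ^ 2 * (Fintype.card F : ℝ)) := by
  have hF0 : (0 : ℝ) < (Fintype.card F : ℝ) := by exact_mod_cast Fintype.card_pos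
  have hθ : (0 : ℝ) < ρ - ε := sub_pos.2 hερ
  have hθd : 4 * (d : ℝ) / (Fintype.card F : ℝ) ≤ (ρ - ε) ^ 2 := by
    have hnn : (0 : ℝ) ≤ (d : ℝ) / (Fintype.card F : ℝ) := by positivity
    have h4 : (2 * Real.sqrt ((d : ℝ) / (Fintype.card F : ℝ))) ^ 2 ≤ (ρ - ε) ^ 2 :=
      pow_le_pow_left₀ (by positivity) hgap 2
    rw [mul_pow, Real.sq_sqrt hnn] at h4
    calc 4 * (d : ℝ) / (Fintype.card F : ℝ)
        = 2 ^ 2 * ((d : ℝ) / (Fintype.card F : ℝ)) := by ring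
      _ ≤ (ρ - ε) ^ 2 := h4
  set σT : F → ((Fin m → F) × (Fin m → F) × (Fin m → F)) →
      ((Fin m → F) × (Fin m → F) × (Fin m → F)) :=
    fun c p => (p.1, p.2.1 + c • (p.2.2 - p.1), p.2.2) with hσT
  have hinv : ∀ (c : F) p, σT (-c) (σT c p) = p := by
    intro c p
    rw [hσT]
    refine Prod.ext rfl (Prod.ext ?_ rfl)
    show p.2.1 + c • (p.2.2 - p.1) + (-c) • (p.2.2 - p.1) = p.2.1
    rw [neg_smul]
    abel
  set S := (Finset.univ : Finset ((Fin m → F) × (Fin m → F) × (Fin m → F))).filter fun p =>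
      LinearIndependent F ![p.2.1, p.2.2 - p.1] with hS
  set Bad : ((Fin m → F) × (Fin m → F) × (Fin m → F)) → Prop := fun p =>
      ∃ q q' : MvPolynomial (Fin 2) F,
        InPlaneList f d (ρ - ε) p q ∧ InPlaneList f d (ρ - ε) p q' ∧ q ≠ q' ∧
        ∀ t : F, MvPolynomial.eval ![t, 0] q = MvPolynomial.eval ![t, 0] q' with hBad
  set B := S.filter Bad with hB
  have hSmem : ∀ (c : F) p, p ∈ S → σT c p ∈ S := by
    intro c p hp
    rw [hS, Finset.mem_filter] at hp ⊢
    refine ⟨Finset.mem_univ _, ?_⟩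
    show LinearIndependent F ![p.2.1 + c • (p.2.2 - p.1), p.2.2 - p.1]
    exact li_shear c _ _ hp.2
  -- for each c, the shear is a bijection between bad sets
  have key1 : ∀ c : F, (S.filter fun p => Bad (σT c p)).card = B.card := by
    intro c
    refine Finset.card_nbij' (σT c) (σT (-c)) ?_ ?_ ?_ ?_
    · intro p hp
      rw [Finset.mem_coe, Finset.mem_filter] at hp
      rw [Finset.mem_coe, hB, Finset.mem_filter]
      exact ⟨hSmem c p hp.1, hp.2⟩
    · intro p hp
      rw [Finset.mem_coe, hB, Finset.mem_filter] at hp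
      rw [Finset.mem_coe, Finset.mem_filter]
      refine ⟨hSmem (-c) p hp.1, ?_⟩
      have : σT c (σT (-c) p) = p := by
        have h' := hinv (-c) p
        rwa [neg_neg] at h'
      rw [this]
      exact hp.2
    · intro p _
      exact hinv c p
    · intro p _
      have h' := hinv (-c) p
      rwa [neg_neg] at h'
  -- double counting
  have key2 : (Fintype.card F) * B.card
      = ∑ p ∈ S, ((univ : Finset F).filter fun c => Bad (σT c p)).card := by
    calc (Fintype.card F) * B.card = ∑ _c ∈ (univ : Finset F), B.card := by
          rw [Finset.sum_const, Finset.card_univ, smul_eq_mul]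
      _ = ∑ c ∈ (univ : Finset F), (S.filter fun p => Bad (σT c p)).card :=
          Finset.sum_congr rfl fun c _ => (key1 c).symm
      _ = ∑ c ∈ (univ : Finset F), ∑ p ∈ S, ite (Bad (σT c p)) 1 0 :=
          Finset.sum_congr rfl fun c _ => Finset.card_filter _ _
      _ = ∑ p ∈ S, ∑ c ∈ (univ : Finset F), ite (Bad (σT c p)) 1 0 := Finset.sum_comm
      _ = ∑ p ∈ S, ((univ : Finset F).filter fun c => Bad (σT c p)).card :=
          Finset.sum_congr rfl fun p _ => (Finset.card_filter _ _).symm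
  -- per-plane bound
  have key3 : ∀ p, (((univ : Finset F).filter fun c => Bad (σT c p)).card : ℝ)
      ≤ 4 * (d : ℝ) / (ρ - ε) ^ 2 := by
    intro p
    have hsub : ((univ : Finset F).filter fun c => Bad (σT c p))
        ⊆ (univ : Finset F).filter fun c => ∃ q q' : MvPolynomial (Fin 2) F,
          InPlaneList f d (ρ - ε) p q ∧ InPlaneList f d (ρ - ε) p q' ∧ q ≠ q' ∧
          ∀ t : F, MvPolynomial.eval ![t, c * t] q = MvPolynomial.eval ![t, c * t] q' := by
      refine Finset.monotone_filter_right _ ?_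
      intro c _ hc
      exact bad_shear f (ρ - ε) c p hc
    calc (((univ : Finset F).filter fun c => Bad (σT c p)).card : ℝ)
        ≤ _ := Nat.cast_le.2 (Finset.card_le_card hsub)
      _ ≤ 4 * (d : ℝ) / (ρ - ε) ^ 2 := card_badslope_le f hd (ρ - ε) hθ hθd p
  -- assemble
  have hmain : (Fintype.card F : ℝ) * (B.card : ℝ)
      ≤ (S.card : ℝ) * (4 * (d : ℝ) / (ρ - ε) ^ 2) := by
    have : ((Fintype.card F * B.card : ℕ) : ℝ)
        = ∑ p ∈ S, (((univ : Finset F).filter fun c => Bad (σT c p)).card : ℝ) := by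
      rw [key2]
      push_cast
      rfl
    push_cast at this
    rw [this]
    calc (∑ p ∈ S, (((univ : Finset F).filter fun c => Bad (σT c p)).card : ℝ))
        ≤ ∑ _p ∈ S, 4 * (d : ℝ) / (ρ - ε) ^ 2 := Finset.sum_le_sum fun p _ => key3 p
      _ = (S.card : ℝ) * (4 * (d : ℝ) / (ρ - ε) ^ 2) := by
          rw [Finset.sum_const, nsmul_eq_mul]
  by_cases hS0 : S.card = 0
  · have hB0 : B.card = 0 := Nat.eq_zero_of_le_zero (hS0 ▸ Finset.card_filter_le S Bad)
    rw [hB0]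
    simp only [Nat.cast_zero, zero_div]
    positivity
  · have hS0' : (0 : ℝ) < (S.card : ℝ) := by
      exact_mod_cast Nat.pos_of_ne_zero hS0
    rw [div_le_div_iff₀ hS0' (by positivity)]
    have hexp : (S.card : ℝ) * (4 * (d : ℝ) / (ρ - ε) ^ 2) * (ρ - ε) ^ 2
        = (S.card : ℝ) * (4 * (d : ℝ)) := by
      field_simp
    have hmul := mul_le_mul_of_nonneg_right hmain (sq_nonneg (ρ - ε))
    rw [hexp] at hmul
    nlinarith [hmul]
end

section
/- Let I be a nonempty set (of inputs) and R a nonempty finite set (of randomness strings), and let Succ ⊆ I × R (a success relation). Let s and t be positive integers, let sk : I → {0,1}^s (a sketch map), let Ver ⊆ {0,1}^s × R (a verifier relation), and let 0 ≤ ε < 2^{−s/t}. Suppose: (i) for every x ∈ I and r ∈ R, if (sk(x), r) ∈ Ver then (x, r) ∈ Succ; and (ii) for every x ∈ I, the fraction of r ∈ R with (sk(x), r) ∉ Ver is at most ε. Then there exist r₁, …, r_t ∈ R such that for every x ∈ I there is some 1 ≤ i ≤ t with (x, r_i) ∈ Succ. -/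
open Finset

open scoped Classical in
/-- derandomization by verifying from a sketch. If a deterministic verifier
`Ver`, reading only an `s`-bit sketch `sk x` of the input `x`, certifies success of the
randomized computation (soundness (i)), and on every input rejects at most an `ε`-fraction
of the randomness strings (ii), with `ε < 2^{-s/t}`, then there are `t` randomness strings
`r₁, …, r_t` such that every input succeeds on at least one of them. -/
theorem derandomization_by_oblivious_verifier
    (I : Type*) [Nonempty I] (R : Type*) [Fintype R] [Nonempty R]
    (Succ : I → R → Prop)
    (s t : ℕ) (hs : 0 < s) (ht : 0 < t)
    (sk : I → (Fin s → Bool))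
    (Ver : (Fin s → Bool) → R → Prop)
    (ε : ℝ) (hε0 : 0 ≤ ε) (hε : ε < (2 : ℝ) ^ (-(s : ℝ) / (t : ℝ)))
    (hsound : ∀ (x : I) (r : R), Ver (sk x) r → Succ x r)
    (hreject : ∀ x : I,
      (((Finset.univ : Finset R).filter fun r => ¬ Ver (sk x) r).card : ℝ) /
        (Fintype.card R : ℝ) ≤ ε) :
    ∃ rs : Fin t → R, ∀ x : I, ∃ i, Succ x (rs i) := by
  classical
  have hR : (0:ℝ) < (Fintype.card R : ℝ) := by exact_mod_cast Fintype.card_pos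
  set B : (Fin s → Bool) → Finset R := fun σ => univ.filter fun r => ¬ Ver σ r with hBdef
  set S : Finset (Fin s → Bool) := univ.filter fun σ => ∃ x, sk x = σ with hSdef
  have hBcard : ∀ σ ∈ S, ((B σ).card : ℝ) ≤ ε * (Fintype.card R : ℝ) := by
    intro σ hσ
    rcases (mem_filter.mp hσ).2 with ⟨x, hx⟩
    have h := hreject x
    rw [hx] at h
    have := mul_le_mul_of_nonneg_right h hR.le
    rwa [div_mul_cancel₀ _ hR.ne'] at this
  set Bad : Finset (Fin t → R) :=
    univ.filter fun rs => ∃ x : I, ∀ i, ¬ Ver (sk x) (rs i) with hBaddef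
  have hsub : Bad ⊆ S.biUnion fun σ => Fintype.piFinset fun _ : Fin t => B σ := by
    intro rs hrs
    rcases (mem_filter.mp hrs).2 with ⟨x, hx⟩
    refine mem_biUnion.mpr ⟨sk x, mem_filter.mpr ⟨mem_univ _, ⟨x, rfl⟩⟩,
      Fintype.mem_piFinset.mpr fun i => mem_filter.mpr ⟨mem_univ _, hx i⟩⟩
  have hεt : ε ^ t < (2:ℝ) ^ (-(s:ℝ)) := by
    have hpow : ((2:ℝ) ^ (-(s : ℝ) / (t : ℝ))) ^ t = (2:ℝ) ^ (-(s:ℝ)) := by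
      rw [← Real.rpow_natCast ((2:ℝ) ^ (-(s : ℝ) / (t : ℝ))) t,
        ← Real.rpow_mul (by norm_num)]
      congr 1
      field_simp
    calc ε ^ t < ((2:ℝ) ^ (-(s : ℝ) / (t : ℝ))) ^ t := pow_lt_pow_left₀ hε hε0 ht.ne'
      _ = (2:ℝ) ^ (-(s:ℝ)) := hpow
  have hScard : (S.card : ℝ) ≤ (2:ℝ) ^ s := by
    have : S.card ≤ Fintype.card (Fin s → Bool) := Finset.card_le_univ S
    have hcard : Fintype.card (Fin s → Bool) = 2 ^ s := by simp
    rw [hcard] at this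
    exact_mod_cast this
  have hBadcard : (Bad.card : ℝ) < (Fintype.card R : ℝ) ^ t := by
    have h1 : Bad.card ≤ ∑ σ ∈ S, (B σ).card ^ t := by
      calc Bad.card ≤ (S.biUnion fun σ => Fintype.piFinset fun _ : Fin t => B σ).card :=
            card_le_card hsub
        _ ≤ ∑ σ ∈ S, (Fintype.piFinset fun _ : Fin t => B σ).card := card_biUnion_le
        _ = ∑ σ ∈ S, (B σ).card ^ t := by
            refine Finset.sum_congr rfl fun σ _ => ?_
            rw [Fintype.card_piFinset]
            simp
    have h2 : (Bad.card : ℝ) ≤ ∑ σ ∈ S, ((B σ).card : ℝ) ^ t := by exact_mod_cast h1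
    have h3 : ∑ σ ∈ S, ((B σ).card : ℝ) ^ t ≤
        (S.card : ℝ) * (ε * (Fintype.card R : ℝ)) ^ t := by
      calc ∑ σ ∈ S, ((B σ).card : ℝ) ^ t
          ≤ ∑ _σ ∈ S, (ε * (Fintype.card R : ℝ)) ^ t :=
            Finset.sum_le_sum fun σ hσ =>
              pow_le_pow_left₀ (by positivity) (hBcard σ hσ) t
        _ = (S.card : ℝ) * (ε * (Fintype.card R : ℝ)) ^ t := by
            rw [Finset.sum_const, nsmul_eq_mul]
    have h4 : (S.card : ℝ) * (ε * (Fintype.card R : ℝ)) ^ t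
        ≤ (2:ℝ) ^ s * (ε ^ t * (Fintype.card R : ℝ) ^ t) := by
      rw [mul_pow]
      exact mul_le_mul_of_nonneg_right hScard (by positivity)
    have h5 : (2:ℝ) ^ s * (ε ^ t * (Fintype.card R : ℝ) ^ t)
        < (2:ℝ) ^ s * ((2:ℝ) ^ (-(s:ℝ)) * (Fintype.card R : ℝ) ^ t) := by
      apply mul_lt_mul_of_pos_left _ (by positivity)
      exact mul_lt_mul_of_pos_right hεt (by positivity)
    have h6 : (2:ℝ) ^ s * ((2:ℝ) ^ (-(s:ℝ)) * (Fintype.card R : ℝ) ^ t)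
        = (Fintype.card R : ℝ) ^ t := by
      rw [← mul_assoc]
      have : (2:ℝ) ^ s * (2:ℝ) ^ (-(s:ℝ)) = 1 := by
        rw [← Real.rpow_natCast 2 s, ← Real.rpow_add (by norm_num)]
        simp
      rw [this, one_mul]
    linarith
  have hne : Bad ≠ univ := by
    intro h
    rw [h] at hBadcard
    have : (Fintype.card (Fin t → R) : ℝ) = (Fintype.card R : ℝ) ^ t := by
      rw [Fintype.card_fun]
      push_cast
      simp
    rw [Finset.card_univ, this] at hBadcard
    exact lt_irrefl _ hBadcard
  obtain ⟨rs, hrs⟩ : ∃ rs : Fin t → R, rs ∉ Bad := by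
    by_contra hcon
    push_neg at hcon
    exact hne (Finset.eq_univ_iff_forall.mpr hcon)
  refine ⟨rs, fun x => ?_⟩
  have : ¬ ∃ x : I, ∀ i, ¬ Ver (sk x) (rs i) := fun h =>
    hrs (mem_filter.mpr ⟨mem_univ _, h⟩)
  push_neg at this
  obtain ⟨i, hi⟩ := this x
  exact ⟨i, hsound x (rs i) hi⟩
end
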